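/- arXiv:1810.02304 — 6 statements merged into one kernel-verified Lean document; each statement's English description precedes it below -/
import Mathlib

section
/- For every node v of a finite tree T, the eccentricity of v equals the distance from v to the center of T plus the radius of T; that is, ecc_T(v) = dist_T(v, C(T)) + rad(T), where C(T) is the set of vertices of minimum eccentricity. -/
section
open SimpleGraph

/-- In a tree, every path realizes the distance between its endpoints. -/
lemma tree_path_length {V : Type*} {T : SimpleGraph V} (hT : T.IsTree) {a b : V}
    (p : T.Walk a b) (hp : p.IsPath) : p.length = T.dist a b := by
  obtain ⟨q, hq, hql⟩ := hT.isConnected.exists_path_of_dist a b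
  have := (hT.existsUnique_path a b).unique hp hq
  rw [this, hql]

/-- A vertex on a shortest walk is metrically between the endpoints. -/
lemma between_of_mem_support {V : Type*} {T : SimpleGraph V} (hconn : T.Connected) {a b x : V}
    (p : T.Walk a b) (hlen : p.length = T.dist a b) (hx : x ∈ p.support) :
    T.dist a x + T.dist x b = T.dist a b := by
  classical
  have hspec := p.take_spec hx
  have hlens : (p.takeUntil x hx).length + (p.dropUntil x hx).length = p.length := by
    have := congrArg SimpleGraph.Walk.length hspec
    rwa [SimpleGraph.Walk.length_append] at this
  have h1 : T.dist a x ≤ (p.takeUntil x hx).length := SimpleGraph.dist_le _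
  have h2 : T.dist x b ≤ (p.dropUntil x hx).length := SimpleGraph.dist_le _
  have h3 : T.dist a b ≤ T.dist a x + T.dist x b := hconn.dist_triangle
  omega

/-- Transitivity of metric betweenness in a tree. -/
lemma btw_trans {V : Type*} {T : SimpleGraph V} (hT : T.IsTree) {a b c d : V}
    (hbc : b ≠ c)
    (h1 : T.dist a c = T.dist a b + T.dist b c)
    (h2 : T.dist b d = T.dist b c + T.dist c d) :
    T.dist a d = T.dist a b + T.dist b c + T.dist c d := by
  have hconn := hT.isConnected
  obtain ⟨p, hpl⟩ := hconn.exists_walk_length_eq_dist a b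
  obtain ⟨q, hql⟩ := hconn.exists_walk_length_eq_dist b c
  obtain ⟨r, hrl⟩ := hconn.exists_walk_length_eq_dist c d
  have hpq_len : (p.append q).length = T.dist a c := by
    rw [SimpleGraph.Walk.length_append, hpl, hql, h1]
  have hpq : (p.append q).IsPath := (p.append q).isPath_of_length_eq_dist hpq_len
  have hqr_len : (q.append r).length = T.dist b d := by
    rw [SimpleGraph.Walk.length_append, hql, hrl, h2]
  have hqr : (q.append r).IsPath := (q.append r).isPath_of_length_eq_dist hqr_len
  have hr : r.IsPath := r.isPath_of_length_eq_dist hrl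
  have hbcpos : 0 < T.dist b c := hconn.pos_dist_of_ne hbc
  -- the full concatenation is a path
  have hs : ((p.append q).append r).IsPath := by
    rw [SimpleGraph.Walk.isPath_def, SimpleGraph.Walk.support_append]
    apply List.Nodup.append
    · exact hpq.support_nodup
    · have := hr.support_nodup
      rw [r.support_eq_cons] at this
      exact this.of_cons
    · -- disjointness
      intro x hx1 hx2
      have hxc : x ≠ c := by
        intro h
        subst h
        have := hr.support_nodup
        rw [r.support_eq_cons] at this
        exact (List.nodup_cons.mp this).1 hx2
      have hxr : x ∈ r.support := List.mem_of_mem_tail hx2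
      have hbr : T.dist c x + T.dist x d = T.dist c d :=
        between_of_mem_support hconn r hrl hxr
      have hxcpos : 0 < T.dist x c := hconn.pos_dist_of_ne hxc
      have hcomm1 : T.dist x c = T.dist c x := SimpleGraph.dist_comm
      rcases (SimpleGraph.Walk.mem_support_append_iff p q).mp hx1 with hxp | hxq
      · -- x on the a→b path
        have hbp : T.dist a x + T.dist x b = T.dist a b :=
          between_of_mem_support hconn p hpl hxp
        have t1 : T.dist a c ≤ T.dist a x + T.dist x c := hconn.dist_triangle
        have t2 : T.dist b d ≤ T.dist b x + T.dist x d := hconn.dist_triangle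
        have hcomm2 : T.dist b x = T.dist x b := SimpleGraph.dist_comm
        omega
      · -- x on the b→c path
        have hbq : T.dist b x + T.dist x c = T.dist b c :=
          between_of_mem_support hconn q hql hxq
        have t2 : T.dist b d ≤ T.dist b x + T.dist x d := hconn.dist_triangle
        omega
  have := tree_path_length hT _ hs
  rw [SimpleGraph.Walk.length_append, SimpleGraph.Walk.length_append, hpl, hql, hrl] at this
  omega

end

noncomputable def ecc {V : Type*} [Fintype V] (T : SimpleGraph V) (v : V) : ℕ :=
  Finset.univ.sup fun u => T.dist v u

noncomputable def trad {V : Type*} [Fintype V] (T : SimpleGraph V) : ℕ :=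
  sInf (Set.range (ecc T))

noncomputable def center {V : Type*} [Fintype V] (T : SimpleGraph V) : Set V :=
  {v | ecc T v = trad T}

lemma dist_le_ecc {V : Type*} [Fintype V] (T : SimpleGraph V) (v u : V) :
    T.dist v u ≤ ecc T v :=
  Finset.le_sup (Finset.mem_univ u)

lemma trad_le_ecc {V : Type*} [Fintype V] (T : SimpleGraph V) (v : V) :
    trad T ≤ ecc T v :=
  Nat.sInf_le ⟨v, rfl⟩

lemma exists_ecc_eq {V : Type*} [Fintype V] [Nonempty V] (T : SimpleGraph V) (v : V) :
    ∃ u : V, ecc T v = T.dist v u := by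
  obtain ⟨u, -, hu⟩ := Finset.exists_mem_eq_sup Finset.univ Finset.univ_nonempty
    (fun u => T.dist v u)
  exact ⟨u, hu⟩

/-- For every node `v` of a finite tree `T`,
`ecc_T(v) = dist_T(v, C(T)) + rad(T)`. -/
theorem stmt0 {V : Type*} [Fintype V] [Nonempty V] (T : SimpleGraph V)
    (hT : T.IsTree) (v : V) :
    ecc T v = sInf ((fun c => T.dist v c) '' center T) + trad T := by
  have hconn := hT.isConnected
  -- the center is nonempty
  have hcent_ne : (center T).Nonempty := by
    have hr : (Set.range (ecc T)).Nonempty := Set.range_nonempty _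
    obtain ⟨c, hc⟩ := Nat.sInf_mem hr
    exact ⟨c, hc⟩
  have himg_ne : ((fun c => T.dist v c) '' center T).Nonempty := hcent_ne.image _
  obtain ⟨c, hc_center, hc_dist0⟩ := Nat.sInf_mem himg_ne
  have hc_ecc : ecc T c = trad T := hc_center
  have hc_dist : T.dist v c = sInf ((fun c => T.dist v c) '' center T) := hc_dist0
  set m := sInf ((fun c => T.dist v c) '' center T) with hm
  -- upper bound
  have hub : ecc T v ≤ m + trad T := by
    apply Finset.sup_le
    intro u _
    calc T.dist v u ≤ T.dist v c + T.dist c u := hconn.dist_triangle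
      _ ≤ T.dist v c + ecc T c := by
          exact Nat.add_le_add_left (dist_le_ecc T c u) _
      _ = m + trad T := by rw [hc_dist, hc_ecc]
  -- lower bound
  have hlb : m + trad T ≤ ecc T v := by
    rcases Nat.eq_zero_or_pos m with h0 | hpos
    · rw [h0, Nat.zero_add]
      exact trad_le_ecc T v
    · -- v ≠ c; take the neighbor of c towards v
      have hdvc : T.dist v c = m := hc_dist
      have hdcv : T.dist c v = m := by rw [SimpleGraph.dist_comm]; exact hdvc
      obtain ⟨p, hpl⟩ := hconn.exists_walk_length_eq_dist c v
      cases p with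
      | nil => rw [SimpleGraph.dist_self] at hdcv; omega
      | cons hadj q =>
        rename_i w
        -- hadj : T.Adj c w, q : T.Walk w v
        have hql : q.length = m - 1 := by
          have : q.length + 1 = m := by
            simpa [hdcv] using hpl
          omega
        have hdwc : T.dist w c = 1 := by
          rw [SimpleGraph.dist_eq_one_iff_adj]; exact hadj.symm
        have hdvw : T.dist v w = m - 1 := by
          have h1 : T.dist v w ≤ m - 1 := by
            rw [SimpleGraph.dist_comm]
            calc T.dist w v ≤ q.length := SimpleGraph.dist_le q
              _ = m - 1 := hql
          have h2 : T.dist v c ≤ T.dist v w + T.dist w c := hconn.dist_triangle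
          omega
        -- w is not a center
        have hw_not : ecc T w ≠ trad T := by
          intro hw
          have : m ≤ T.dist v w := Nat.sInf_le ⟨w, hw, rfl⟩
          omega
        have hw_gt : trad T + 1 ≤ ecc T w :=
          Nat.lt_of_le_of_ne (trad_le_ecc T w) (Ne.symm hw_not)
        obtain ⟨u, hu⟩ := exists_ecc_eq T w
        have hwu_ge : trad T + 1 ≤ T.dist w u := hu ▸ hw_gt
        have hcu_le : T.dist c u ≤ trad T := by
          calc T.dist c u ≤ ecc T c := dist_le_ecc T c u
            _ = trad T := hc_ecc
        have htri : T.dist w u ≤ T.dist w c + T.dist c u := hconn.dist_triangle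
        have hcu : T.dist c u = trad T := by omega
        have hwu : T.dist w u = 1 + trad T := by omega
        -- apply betweenness transitivity with a = v, b = w, c = c, d = u
        have hwc_ne : w ≠ c := hadj.ne'
        have h1 : T.dist v c = T.dist v w + T.dist w c := by omega
        have h2 : T.dist w u = T.dist w c + T.dist c u := by omega
        have hkey := btw_trans hT hwc_ne h1 h2
        have : T.dist v u = m + trad T := by omega
        calc m + trad T = T.dist v u := this.symm
          _ ≤ ecc T v := dist_le_ecc T v u
  omega
end

section
/- Let T be a k-Steiner root of a graph G and let X be a clique-intersection of G (an intersection of a nonempty family of maximal cliques of G). Then Real(T⟨X⟩) = X and diam(T⟨X⟩) ≤ k. -/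
noncomputable def setEcc {V : Type*} (T : SimpleGraph V) (S : Set V) (v : V) : ℕ :=
  sSup {d | ∃ u ∈ S, T.dist v u = d}

noncomputable def setDiam {V : Type*} (T : SimpleGraph V) (S : Set V) : ℕ :=
  sSup {d | ∃ u ∈ S, ∃ w ∈ S, T.dist u w = d}

noncomputable def setRad {V : Type*} (T : SimpleGraph V) (S : Set V) : ℕ :=
  sInf {e | ∃ v ∈ S, setEcc T S v = e}

noncomputable def setCenter {V : Type*} (T : SimpleGraph V) (S : Set V) : Set V :=
  {v ∈ S | setEcc T S v = setRad T S}

/-- `T` is a `k`-Steiner root of `G` (via the injection `f` of the vertices of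
`G` into the nodes of `T`): `T` is a tree and two distinct vertices of `G` are
adjacent iff their images are at distance at most `k` in `T`. -/
def IsSteinerRoot (k : ℕ) {α β : Type*} (G : SimpleGraph α) (T : SimpleGraph β)
    (f : α → β) : Prop :=
  Function.Injective f ∧ T.IsTree ∧
    ∀ u v : α, u ≠ v → (G.Adj u v ↔ T.dist (f u) (f v) ≤ k)

/-- The vertex set of the smallest subtree of the tree `T` containing `X`:
all nodes lying on a path between two elements of `X`. -/
def span {β : Type*} (T : SimpleGraph β) (X : Set β) : Set β :=
  {w | ∃ u ∈ X, ∃ v ∈ X, ∃ p : T.Walk u v, p.IsPath ∧ w ∈ p.support}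

def IsMaxClique {α : Type*} (G : SimpleGraph α) (K : Set α) : Prop :=
  G.IsClique K ∧ ∀ K', G.IsClique K' → K ⊆ K' → K' = K

/-- `X` is the intersection of a nonempty family of maximal cliques of `G`. -/
def IsCliqueIntersection {α : Type*} (G : SimpleGraph α) (X : Set α) : Prop :=
  ∃ 𝒦 : Set (Set α), 𝒦.Nonempty ∧ (∀ K ∈ 𝒦, IsMaxClique G K) ∧ X = ⋂₀ 𝒦

open SimpleGraph in
/-- In a tree, if `a` lies on the path from `u` to `v`, then for any vertex `c`
we have `dist c a ≤ max (dist c u) (dist c v)`. -/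
lemma tree_dist_le_max {β : Type*} {T : SimpleGraph β} (hT : T.IsTree)
    {u v a : β} (c : β) (p : T.Walk u v) (hp : p.IsPath) (ha : a ∈ p.support) :
    T.dist c a ≤ max (T.dist c u) (T.dist c v) := by
  classical
  obtain ⟨pu, hpu⟩ := hT.isConnected.exists_walk_length_eq_dist c u
  obtain ⟨pv, hpv⟩ := hT.isConnected.exists_walk_length_eq_dist c v
  set w : T.Walk u v := pu.reverse.append pv with hw
  have hwb : w.bypass = p := (hT.existsUnique_path u v).unique w.bypass_isPath hp
  have ha' : a ∈ w.support := w.support_bypass_subset (hwb ▸ ha)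
  rcases (SimpleGraph.Walk.mem_support_append_iff _ _).1 ha' with h | h
  · rw [SimpleGraph.Walk.support_reverse, List.mem_reverse] at h
    refine le_max_of_le_left ?_
    calc T.dist c a ≤ (pu.takeUntil a h).length := SimpleGraph.dist_le _
      _ ≤ pu.length := SimpleGraph.Walk.length_takeUntil_le _ h
      _ = T.dist c u := hpu
  · refine le_max_of_le_right ?_
    calc T.dist c a ≤ (pv.takeUntil a h).length := SimpleGraph.dist_le _
      _ ≤ pv.length := SimpleGraph.Walk.length_takeUntil_le _ h
      _ = T.dist c v := hpv

/-- If `T` is a `k`-Steiner root of `G` and `X` is a clique-intersection of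
`G`, then `Real(T⟨X⟩) = X` and `diam(T⟨X⟩) ≤ k`. -/
theorem stmt7 {α β : Type*} [Fintype α] [Fintype β] (k : ℕ)
    (G : SimpleGraph α) (hG : G.Connected) (T : SimpleGraph β) (f : α → β)
    (hroot : IsSteinerRoot k G T f) (X : Set α)
    (hX : IsCliqueIntersection G X) :
    span T (f '' X) ∩ Set.range f = f '' X ∧
    setDiam T (span T (f '' X)) ≤ k := by
  obtain ⟨hinj, hT, hadj⟩ := hroot
  obtain ⟨𝒦, ⟨K0, hK0⟩, h𝒦, hXeq⟩ := hX
  have hXsub : ∀ K ∈ 𝒦, X ⊆ K := fun K hK => hXeq ▸ Set.sInter_subset_of_mem hK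
  -- distance bound inside any clique
  have hclique : ∀ K, G.IsClique K → ∀ x ∈ K, ∀ y ∈ K,
      T.dist (f x) (f y) ≤ k := by
    intro K hKcl x hx y hy
    by_cases hxy : x = y
    · subst hxy; simp [SimpleGraph.dist_self]
    · exact (hadj x y hxy).1 (hKcl hx hy hxy)
  have hdistX : ∀ x ∈ X, ∀ y ∈ X, T.dist (f x) (f y) ≤ k :=
    hclique X ((h𝒦 K0 hK0).1.subset (hXsub K0 hK0))
  constructor
  · apply Set.Subset.antisymm
    · rintro w ⟨hwspan, a, rfl⟩
      obtain ⟨-, ⟨u, hu, rfl⟩, -, ⟨v, hv, rfl⟩, p, hp, hap⟩ := hwspan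
      refine ⟨a, ?_, rfl⟩
      rw [hXeq]
      intro K hK
      obtain ⟨hKcl, hKmax⟩ := h𝒦 K hK
      have key : ∀ b ∈ K, T.dist (f b) (f a) ≤ k := by
        intro b hb
        refine le_trans (tree_dist_le_max hT (f b) p hp hap) (max_le ?_ ?_)
        · exact hclique K hKcl b hb u (hXsub K hK hu)
        · exact hclique K hKcl b hb v (hXsub K hK hv)
      have hcl' : G.IsClique (insert a K) := by
        intro x hx y hy hxy
        rcases hx with rfl | hx
        · rcases hy with rfl | hy
          · exact absurd rfl hxy
          · exact (hadj x y hxy).2 (by rw [SimpleGraph.dist_comm]; exact key y hy)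
        · rcases hy with rfl | hy
          · exact ((hadj y x (Ne.symm hxy)).2 (by rw [SimpleGraph.dist_comm]; exact key x hx)).symm
          · exact hKcl hx hy hxy
      have := hKmax _ hcl' (Set.subset_insert a K)
      rw [← this]
      exact Set.mem_insert a K
    · rintro w ⟨x, hx, rfl⟩
      exact ⟨⟨f x, ⟨x, hx, rfl⟩, f x, ⟨x, hx, rfl⟩, SimpleGraph.Walk.nil,
        SimpleGraph.Walk.IsPath.nil, by simp⟩, x, rfl⟩
  · refine csSup_le' ?_
    rintro d ⟨w1, hw1, w2, hw2, rfl⟩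
    obtain ⟨-, ⟨u1, hu1, rfl⟩, -, ⟨v1, hv1, rfl⟩, p1, hp1, h1⟩ := hw1
    obtain ⟨-, ⟨u2, hu2, rfl⟩, -, ⟨v2, hv2, rfl⟩, p2, hp2, h2⟩ := hw2
    have step : ∀ x ∈ X, T.dist (f x) w2 ≤ k := by
      intro x hx
      refine le_trans (tree_dist_le_max hT (f x) p2 hp2 h2) (max_le ?_ ?_)
      · exact hdistX x hx u2 hu2
      · exact hdistX x hx v2 hv2
    rw [SimpleGraph.dist_comm]
    refine le_trans (tree_dist_le_max hT w2 p1 hp1 h1) (max_le ?_ ?_)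
    · rw [SimpleGraph.dist_comm]; exact step u1 hu1
    · rw [SimpleGraph.dist_comm]; exact step v1 hv1
end

section
/- Let T be a k-Steiner root of a graph G and let X, X' be clique-intersections of G such that C(T⟨X⟩) ⊆ C(T⟨X'⟩). Then X ∪ X' is a clique of G. -/
section TreeLemmas

variable {β : Type*} {T : SimpleGraph β}

/-- Betweenness with respect to the graph metric. -/
def TBtw (T : SimpleGraph β) (u x v : β) : Prop :=
  T.dist u x + T.dist x v = T.dist u v

lemma btw_symm {u x v : β} (h : TBtw T u x v) : TBtw T v x u := by
  unfold TBtw at *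
  rw [SimpleGraph.dist_comm (u := v) (v := x), SimpleGraph.dist_comm (u := x) (v := u),
    SimpleGraph.dist_comm (u := v) (v := u)]
  omega

lemma path_length_eq_dist (hT : T.IsTree) {u v : β} {p : T.Walk u v} (hp : p.IsPath) :
    p.length = T.dist u v := by
  obtain ⟨q, hq, hql⟩ := hT.isConnected.exists_path_of_dist u v
  have h : (⟨p, hp⟩ : T.Path u v) = ⟨q, hq⟩ := hT.IsAcyclic.path_unique _ _
  rw [show p = q from congrArg Subtype.val h, hql]

lemma btw_of_mem_support (hT : T.IsTree) {u v x : β} {p : T.Walk u v} (hp : p.IsPath)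
    (hx : x ∈ p.support) : TBtw T u x v := by
  classical
  have h1 : (p.takeUntil x hx).length = T.dist u x :=
    path_length_eq_dist hT (hp.takeUntil hx)
  have h2 : (p.dropUntil x hx).length = T.dist x v :=
    path_length_eq_dist hT (hp.dropUntil hx)
  have h3 : p.length = T.dist u v := path_length_eq_dist hT hp
  have h4 := p.take_spec hx
  unfold TBtw
  rw [← h1, ← h2, ← h3, ← SimpleGraph.Walk.length_append, h4]

lemma exists_path_of_btw (hT : T.IsTree) {u x v : β} (h : TBtw T u x v) :
    ∃ p : T.Walk u v, p.IsPath ∧ x ∈ p.support := by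
  obtain ⟨p1, hp1, hl1⟩ := hT.isConnected.exists_path_of_dist u x
  obtain ⟨p2, hp2, hl2⟩ := hT.isConnected.exists_path_of_dist x v
  refine ⟨p1.append p2, ?_, ?_⟩
  · exact (p1.append p2).isPath_of_length_eq_dist
      (by rw [SimpleGraph.Walk.length_append, hl1, hl2, h])
  · rw [SimpleGraph.Walk.mem_support_append_iff]
    exact Or.inl p1.end_mem_support

lemma btw_split (hT : T.IsTree) {u x v : β} (h : TBtw T u x v) (q : β) :
    TBtw T u x q ∨ TBtw T q x v := by
  classical
  obtain ⟨P, hP, hxP⟩ := exists_path_of_btw hT h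
  obtain ⟨Q, hQ, -⟩ := hT.isConnected.exists_path_of_dist u q
  obtain ⟨R, hR, -⟩ := hT.isConnected.exists_path_of_dist q v
  have huniq : (⟨P, hP⟩ : T.Path u v) = ⟨(Q.append R).bypass, (Q.append R).bypass_isPath⟩ :=
    hT.IsAcyclic.path_unique _ _
  have hxW : x ∈ (Q.append R).support := by
    apply SimpleGraph.Walk.support_bypass_subset
    rw [← show P = (Q.append R).bypass from congrArg Subtype.val huniq]
    exact hxP
  rw [SimpleGraph.Walk.mem_support_append_iff] at hxW
  rcases hxW with hx | hx
  · exact Or.inl (btw_of_mem_support hT hQ hx)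
  · exact Or.inr (btw_of_mem_support hT hR hx)

lemma btw_trans_s9 (hT : T.IsTree) {u z y v : β} (h1 : TBtw T u z y) (h2 : TBtw T u y v) :
    TBtw T u z v := by
  have tri : T.dist z v ≤ T.dist z y + T.dist y v := hT.isConnected.dist_triangle
  have tri2 : T.dist u v ≤ T.dist u z + T.dist z v := hT.isConnected.dist_triangle
  unfold TBtw at *
  omega

lemma dist_le_max_of_btw (hT : T.IsTree) {u x v : β} (h : TBtw T u x v) (w : β) :
    T.dist x w ≤ max (T.dist u w) (T.dist v w) := by
  rcases btw_split hT h w with h2 | h2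
  · refine le_max_of_le_left ?_
    unfold TBtw at h2
    omega
  · refine le_max_of_le_right ?_
    rw [show T.dist x w = T.dist w x from SimpleGraph.dist_comm,
      show T.dist v w = T.dist w v from SimpleGraph.dist_comm]
    unfold TBtw at h2
    omega

lemma exists_mem_support_dist_eq (hT : T.IsTree) :
    ∀ {u v : β} (p : T.Walk u v), p.IsPath → ∀ i ≤ p.length, ∃ m ∈ p.support, T.dist u m = i := by
  intro u v p
  induction p with
  | nil =>
    intro _ i hi
    have : i = 0 := by simpa using hi
    subst this
    exact ⟨_, SimpleGraph.Walk.start_mem_support _, SimpleGraph.dist_self⟩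
  | @cons u u' v h q ih =>
    intro hp i hi
    cases i with
    | zero => exact ⟨_, SimpleGraph.Walk.start_mem_support _, SimpleGraph.dist_self⟩
    | succ j =>
      obtain ⟨m, hm, hdm⟩ := ih hp.of_cons j
        (by rw [SimpleGraph.Walk.length_cons] at hi; omega)
      have hmem : m ∈ (SimpleGraph.Walk.cons h q).support := by
        rw [SimpleGraph.Walk.support_cons]
        exact List.mem_cons_of_mem _ hm
      have b1 := btw_of_mem_support hT hp hmem
      have b2 := btw_of_mem_support hT hp.of_cons hm
      have l1 : (SimpleGraph.Walk.cons h q).length = T.dist u v := path_length_eq_dist hT hp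
      have l2 : q.length = T.dist u' v := path_length_eq_dist hT hp.of_cons
      rw [SimpleGraph.Walk.length_cons] at l1
      refine ⟨m, hmem, ?_⟩
      unfold TBtw at b1 b2
      omega

lemma exists_dist_eq_btw (hT : T.IsTree) {u v : β} {i : ℕ} (hi : i ≤ T.dist u v) :
    ∃ m, T.dist u m = i ∧ TBtw T u m v := by
  obtain ⟨p, hp, hl⟩ := hT.isConnected.exists_path_of_dist u v
  obtain ⟨m, hm, hd⟩ := exists_mem_support_dist_eq hT p hp i (by omega)
  exact ⟨m, hd, btw_of_mem_support hT hp hm⟩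

end TreeLemmas

section SpanLemmas

variable {β : Type*} {T : SimpleGraph β}

lemma subset_span {S : Set β} : S ⊆ span T S := fun x hx =>
  ⟨x, hx, x, hx, SimpleGraph.Walk.nil, SimpleGraph.Walk.IsPath.nil, by simp⟩

lemma mem_span_iff (hT : T.IsTree) {S : Set β} {x : β} :
    x ∈ span T S ↔ ∃ u ∈ S, ∃ v ∈ S, TBtw T u x v := by
  constructor
  · rintro ⟨u, hu, v, hv, p, hp, hx⟩
    exact ⟨u, hu, v, hv, btw_of_mem_support hT hp hx⟩
  · rintro ⟨u, hu, v, hv, hb⟩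
    obtain ⟨p, hp, hx⟩ := exists_path_of_btw hT hb
    exact ⟨u, hu, v, hv, p, hp, hx⟩

lemma span_convex (hT : T.IsTree) {S : Set β} {x y z : β} (hx : x ∈ span T S)
    (hy : y ∈ span T S) (hz : TBtw T x z y) : z ∈ span T S := by
  rw [mem_span_iff hT] at hx hy ⊢
  obtain ⟨u, hu, v, hv, hbx⟩ := hx
  obtain ⟨u', hu', v', hv', hby⟩ := hy
  rcases btw_split hT hz u' with h | h
  · rcases btw_split hT (btw_symm h) u with h2 | h2
    · exact ⟨u', hu', u, hu, h2⟩
    · exact ⟨u, hu, v, hv, btw_trans_s9 hT h2 hbx⟩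
  · exact ⟨u', hu', v', hv', btw_trans_s9 hT h hby⟩

lemma span_dist_le (hT : T.IsTree) {S : Set β} {k : ℕ}
    (hS : ∀ p ∈ S, ∀ q ∈ S, T.dist p q ≤ k) {p q : β}
    (hp : p ∈ span T S) (hq : q ∈ span T S) : T.dist p q ≤ k := by
  rw [mem_span_iff hT] at hp hq
  obtain ⟨u, hu, v, hv, hbp⟩ := hp
  obtain ⟨u', hu', v', hv', hbq⟩ := hq
  have A : T.dist p u' ≤ k :=
    le_trans (dist_le_max_of_btw hT hbp u') (max_le (hS u hu u' hu') (hS v hv u' hu'))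
  have B : T.dist p v' ≤ k :=
    le_trans (dist_le_max_of_btw hT hbp v') (max_le (hS u hu v' hv') (hS v hv v' hv'))
  have C := dist_le_max_of_btw hT hbq p
  rw [show T.dist u' p = T.dist p u' from SimpleGraph.dist_comm,
    show T.dist v' p = T.dist p v' from SimpleGraph.dist_comm] at C
  rw [show T.dist p q = T.dist q p from SimpleGraph.dist_comm]
  exact le_trans C (max_le A B)

end SpanLemmas

section EccLemmas

variable {β : Type*} [Fintype β] {T : SimpleGraph β} {S : Set β}

lemma dist_le_setEcc {v u : β} (hu : u ∈ S) : T.dist v u ≤ setEcc T S v := by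
  refine le_csSup ?_ ⟨u, hu, rfl⟩
  have h : {d | ∃ u ∈ S, T.dist v u = d} = (fun u => T.dist v u) '' S := rfl
  rw [h]
  exact (S.toFinite.image _).bddAbove

lemma setEcc_le {v : β} {n : ℕ} (hS : S.Nonempty) (h : ∀ u ∈ S, T.dist v u ≤ n) :
    setEcc T S v ≤ n := by
  refine csSup_le ⟨T.dist v hS.choose, hS.choose, hS.choose_spec, rfl⟩ ?_
  rintro d ⟨u, hu, rfl⟩
  exact h u hu

lemma setRad_le_setEcc {v : β} (hv : v ∈ S) : setRad T S ≤ setEcc T S v :=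
  Nat.sInf_le ⟨v, hv, rfl⟩

lemma setCenter_nonempty (hS : S.Nonempty) : (setCenter T S).Nonempty := by
  have h : {e | ∃ v ∈ S, setEcc T S v = e}.Nonempty :=
    ⟨setEcc T S hS.choose, hS.choose, hS.choose_spec, rfl⟩
  obtain ⟨v, hv, he⟩ := Nat.sInf_mem h
  exact ⟨v, hv, he⟩

lemma two_setRad_le (hT : T.IsTree) {S0 : Set β} {k : ℕ}
    (hS : (span T S0).Nonempty)
    (hd : ∀ p ∈ span T S0, ∀ q ∈ span T S0, T.dist p q ≤ k) :
    2 * setRad T (span T S0) ≤ k + 1 := by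
  set A := span T S0 with hA
  have hDne : {d | ∃ p ∈ A, ∃ q ∈ A, T.dist p q = d}.Nonempty :=
    ⟨0, hS.choose, hS.choose_spec, hS.choose, hS.choose_spec, SimpleGraph.dist_self⟩
  have hDbdd : BddAbove {d | ∃ p ∈ A, ∃ q ∈ A, T.dist p q = d} :=
    ⟨k, by rintro d ⟨p, hp, q, hq, rfl⟩; exact hd p hp q hq⟩
  set d := sSup {d | ∃ p ∈ A, ∃ q ∈ A, T.dist p q = d} with hdd
  obtain ⟨x, hx, y, hy, hxy⟩ := Nat.sSup_mem hDne hDbdd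
  have hmax : ∀ p ∈ A, ∀ q ∈ A, T.dist p q ≤ d := fun p hp q hq =>
    le_csSup hDbdd ⟨p, hp, q, hq, rfl⟩
  have hdk : d ≤ k := csSup_le hDne (by rintro e ⟨p, hp, q, hq, rfl⟩; exact hd p hp q hq)
  obtain ⟨m, hmd, hmb⟩ := exists_dist_eq_btw hT (u := x) (v := y)
    (i := (d + 1) / 2) (by omega)
  have hmA : m ∈ A := span_convex hT hx hy hmb
  have hecc : ∀ p ∈ A, T.dist m p ≤ (k + 1) / 2 := by
    intro p hp
    rcases btw_split hT hmb p with h | h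
    · have h2 : T.dist x p ≤ d := hmax x hx p hp
      unfold TBtw at h
      omega
    · have h2 : T.dist p y ≤ d := hmax p hp y hy
      have h3 : T.dist m p = T.dist p m := SimpleGraph.dist_comm
      unfold TBtw at h hmb
      omega
  have h4 : setRad T A ≤ (k + 1) / 2 :=
    le_trans (setRad_le_setEcc hmA) (setEcc_le hS hecc)
  omega

end EccLemmas

/-- If `X, X'` are clique-intersections with `C(T⟨X⟩) ⊆ C(T⟨X'⟩)` in a
`k`-Steiner root `T` of `G`, then `X ∪ X'` is a clique of `G`. -/
theorem stmt9 {α β : Type*} [Fintype α] [Fintype β] (k : ℕ)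
    (G : SimpleGraph α) (hG : G.Connected) (T : SimpleGraph β) (f : α → β)
    (hroot : IsSteinerRoot k G T f) (X X' : Set α)
    (hX : IsCliqueIntersection G X) (hX' : IsCliqueIntersection G X')
    (hc : setCenter T (span T (f '' X)) ⊆ setCenter T (span T (f '' X'))) :
    G.IsClique (X ∪ X') := by
  obtain ⟨finj, hT, hadj⟩ := hroot
  have cliqueX : G.IsClique X := by
    obtain ⟨𝒦, ⟨K, hK⟩, hmax, rfl⟩ := hX
    exact ((hmax K hK).1).subset (Set.sInter_subset_of_mem hK)
  have cliqueX' : G.IsClique X' := by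
    obtain ⟨𝒦, ⟨K, hK⟩, hmax, rfl⟩ := hX'
    exact ((hmax K hK).1).subset (Set.sInter_subset_of_mem hK)
  have key : ∀ a ∈ X, ∀ b ∈ X', a ≠ b → G.Adj a b := by
    intro a ha b hb hab
    rw [hadj a b hab]
    by_contra hgt
    push_neg at hgt
    have hk1 : k + 1 ≤ T.dist (f a) (f b) := hgt
    set S := f '' X with hS
    set S' := f '' X' with hS'
    have hSk : ∀ p ∈ S, ∀ q ∈ S, T.dist p q ≤ k := by
      rintro p ⟨x, hx, rfl⟩ q ⟨y, hy, rfl⟩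
      by_cases h : x = y
      · subst h; simp [SimpleGraph.dist_self]
      · exact (hadj x y h).mp (cliqueX hx hy h)
    have hS'k : ∀ p ∈ S', ∀ q ∈ S', T.dist p q ≤ k := by
      rintro p ⟨x, hx, rfl⟩ q ⟨y, hy, rfl⟩
      by_cases h : x = y
      · subst h; simp [SimpleGraph.dist_self]
      · exact (hadj x y h).mp (cliqueX' hx hy h)
    have hfa : f a ∈ span T S := subset_span ⟨a, ha, rfl⟩
    have hfb : f b ∈ span T S' := subset_span ⟨b, hb, rfl⟩
    have hSne : (span T S).Nonempty := ⟨_, hfa⟩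
    have hS'ne : (span T S').Nonempty := ⟨_, hfb⟩
    have hDiam : ∀ p ∈ span T S, ∀ q ∈ span T S, T.dist p q ≤ k :=
      fun p hp q hq => span_dist_le hT hSk hp hq
    have hDiam' : ∀ p ∈ span T S', ∀ q ∈ span T S', T.dist p q ≤ k :=
      fun p hp q hq => span_dist_le hT hS'k hp hq
    obtain ⟨c, hcX⟩ := setCenter_nonempty hSne
    have hcX' : c ∈ setCenter T (span T S') := hc hcX
    obtain ⟨hcs, hce⟩ := hcX
    obtain ⟨hcs', hce'⟩ := hcX'
    have hda : T.dist c (f a) ≤ setRad T (span T S) := hce ▸ dist_le_setEcc hfa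
    have hdb : T.dist c (f b) ≤ setRad T (span T S') := hce' ▸ dist_le_setEcc hfb
    have hrb : 2 * setRad T (span T S) ≤ k + 1 := two_setRad_le hT hSne hDiam
    have hrb' : 2 * setRad T (span T S') ≤ k + 1 := two_setRad_le hT hS'ne hDiam'
    have htri : T.dist (f a) (f b) ≤ T.dist (f a) c + T.dist c (f b) :=
      hT.isConnected.dist_triangle
    have hcomm : T.dist (f a) c = T.dist c (f a) := SimpleGraph.dist_comm
    have e1 : 2 * T.dist c (f a) = k + 1 := by omega
    have e2 : 2 * T.dist c (f b) = k + 1 := by omega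
    have er : setRad T (span T S) = T.dist c (f a) := by omega
    have er' : setRad T (span T S') = T.dist c (f b) := by omega
    obtain ⟨c₁, hc1d, hc1b⟩ := exists_dist_eq_btw hT (u := f a) (v := c)
      (i := T.dist (f a) c - 1) (by omega)
    have hc1span : c₁ ∈ span T S := span_convex hT hfa hcs hc1b
    have hecc : ∀ p ∈ span T S, T.dist c₁ p ≤ setRad T (span T S) := by
      intro p hp
      rcases btw_split hT hc1b p with h | h
      · have hfp : T.dist (f a) p ≤ k := hDiam _ hfa _ hp
        unfold TBtw at h
        omega
      · have hpc : T.dist c p ≤ setRad T (span T S) := hce ▸ dist_le_setEcc hp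
        have hcm : T.dist p c = T.dist c p := SimpleGraph.dist_comm
        have hcm2 : T.dist c₁ p = T.dist p c₁ := SimpleGraph.dist_comm
        unfold TBtw at h
        omega
    have hc1cen : c₁ ∈ setCenter T (span T S) :=
      ⟨hc1span, le_antisymm (setEcc_le hSne hecc) (setRad_le_setEcc hc1span)⟩
    obtain ⟨hc1s', hc1e'⟩ := hc hc1cen
    have hfb2 : T.dist c₁ (f b) ≤ setRad T (span T S') := hc1e' ▸ dist_le_setEcc hfb
    have htri2 : T.dist (f a) (f b) ≤ T.dist (f a) c₁ + T.dist c₁ (f b) :=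
      hT.isConnected.dist_triangle
    omega
  intro a ha b hb hab
  rcases ha with ha | ha <;> rcases hb with hb | hb
  · exact cliqueX ha hb hab
  · exact key a ha b hb hab
  · exact (key b hb a ha hab.symm).symm
  · exact cliqueX' ha hb hab
end

section
/- If a graph G admits a k-Steiner root, then G contains no chain of more than k minimal separators strictly ordered by inclusion; i.e., there is no sequence S_1 ⊂ S_2 ⊂ … ⊂ S_{k+1} of minimal separators of G. -/
/-- `S` separates the nonadjacent vertices `u, v ∉ S`: every walk from `u`
to `v` meets `S`. -/
def IsUVSep {α : Type*} (G : SimpleGraph α) (S : Set α) (u v : α) : Prop :=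
  u ∉ S ∧ v ∉ S ∧ ∀ p : G.Walk u v, ∃ w ∈ p.support, w ∈ S

/-- `S` is a minimal separator of `G`: an inclusion-minimal `uv`-separator
for some nonadjacent pair `u ≠ v`. -/
def IsMinSep {α : Type*} (G : SimpleGraph α) (S : Set α) : Prop :=
  ∃ u v : α, u ≠ v ∧ ¬ G.Adj u v ∧ IsUVSep G S u v ∧
    ∀ S' ⊂ S, ¬ IsUVSep G S' u v



section Aux
open SimpleGraph Walk

section TreeTools
variable {β : Type*} {T : SimpleGraph β}

private lemma walk_len_pos_of_ne {x y : β} (p : T.Walk x y) (h : x ≠ y) : 1 ≤ p.length := by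
  cases p with
  | nil => exact absurd rfl h
  | cons h q => simp

private lemma st10_dist_ne (hT : T.IsTree) {c c' : β} (hcc : T.Adj c c') (z : β) :
    T.dist z c ≠ T.dist z c' := by
  classical
  have hconn := hT.isConnected
  intro h
  obtain ⟨p, hp, hlp⟩ := hconn.exists_path_of_dist z c
  by_cases hc' : c' ∈ p.support
  · have h1 : T.dist z c' ≤ (p.takeUntil c' hc').length := dist_le _
    have h2 : (p.takeUntil c' hc').length + (p.dropUntil c' hc').length = p.length := by
      have h0 := congrArg Walk.length (p.take_spec hc')
      rwa [Walk.length_append] at h0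
    have h3 : 1 ≤ (p.dropUntil c' hc').length :=
      walk_len_pos_of_ne _ (fun hh => hcc.ne' hh)
    omega
  · have hp' : (p.concat hcc).IsPath := by
      rw [← isPath_reverse_iff]
      rw [Walk.reverse_concat]
      exact (cons_isPath_iff _ _).mpr ⟨(isPath_reverse_iff p).mpr hp, by
        simpa [Walk.support_reverse] using hc'⟩
    obtain ⟨q, hq, hlq⟩ := hconn.exists_path_of_dist z c'
    have huniq := hT.IsAcyclic.path_unique ⟨p.concat hcc, hp'⟩ ⟨q, hq⟩
    have hlen : (p.concat hcc).length = q.length := by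
      simpa using congrArg (fun r : T.Path z c' => r.1.length) huniq
    rw [Walk.length_concat] at hlen
    omega

private lemma st10_side_or (hT : T.IsTree) {c c' : β} (hcc : T.Adj c c') (z : β) :
    T.dist z c + 1 = T.dist z c' ∨ T.dist z c' + 1 = T.dist z c := by
  have hconn := hT.isConnected
  have h1 : T.dist z c' ≤ T.dist z c + T.dist c c' := hconn.dist_triangle
  have h2 : T.dist z c ≤ T.dist z c' + T.dist c' c := hconn.dist_triangle
  have e1 : T.dist c c' = 1 := dist_eq_one_iff_adj.mpr hcc
  have e2 : T.dist c' c = 1 := dist_eq_one_iff_adj.mpr hcc.symm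
  have := st10_dist_ne hT hcc z
  omega

end TreeTools

section TreeTools2
variable {β : Type*} {T : SimpleGraph β}

private lemma walk_len_pos_of_ne' {x y : β} (p : T.Walk x y) (h : x ≠ y) : 1 ≤ p.length := by
  cases p with
  | nil => exact absurd rfl h
  | cons h q => simp

-- if z is on the c-side and w on the c'-side and z ~ w in T, then z = c and w = c'
private lemma st10_cross_edge (hT : T.IsTree) {c c' z w : β} (hcc : T.Adj c c')
    (hzw : T.Adj z w)
    (hz : T.dist z c + 1 = T.dist z c')
    (hw : T.dist w c' + 1 = T.dist w c) : z = c ∧ w = c' := by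
  classical
  have hconn := hT.isConnected
  by_cases hgood : z = c ∧ w = c'
  · exact hgood
  exfalso
  obtain ⟨p, hp, hlp⟩ := hconn.exists_path_of_dist z c
  obtain ⟨q, hq, hlq⟩ := hconn.exists_path_of_dist w c'
  -- c' ∉ p.support
  have hc'p : c' ∉ p.support := by
    intro hmem
    have h1 : T.dist z c' ≤ (p.takeUntil c' hmem).length := dist_le _
    have h0 := congrArg Walk.length (p.take_spec hmem)
    rw [Walk.length_append] at h0
    have h3 : 1 ≤ (p.dropUntil c' hmem).length :=
      walk_len_pos_of_ne' _ (fun hh => hcc.ne' hh)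
    omega
  have hcq : c ∉ q.support := by
    intro hmem
    have h1 : T.dist w c ≤ (q.takeUntil c hmem).length := dist_le _
    have h0 := congrArg Walk.length (q.take_spec hmem)
    rw [Walk.length_append] at h0
    have h3 : 1 ≤ (q.dropUntil c hmem).length :=
      walk_len_pos_of_ne' _ (fun hh => hcc.ne hh)
    omega
  -- walk from c' to c avoiding the edge s(c,c')
  set W : T.Walk c' c := q.reverse.append (Walk.cons hzw.symm p) with hW
  have hWedge : s(c, c') ∉ W.edges := by
    intro hmem
    rw [hW, Walk.edges_append] at hmem
    rcases List.mem_append.mp hmem with h1 | h1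
    · have : c ∈ q.reverse.support := Walk.fst_mem_support_of_mem_edges _ h1
      rw [Walk.support_reverse, List.mem_reverse] at this
      exact hcq this
    · rw [Walk.edges_cons, List.mem_cons] at h1
      rcases h1 with h1 | h1
      · rw [Sym2.eq_iff] at h1
        rcases h1 with ⟨h2, h3⟩ | ⟨h2, h3⟩
        · subst h2; subst h3
          simp [SimpleGraph.dist_self] at hw
        · exact hgood ⟨h2.symm, h3.symm⟩
      · have : c' ∈ p.support := Walk.snd_mem_support_of_mem_edges _ h1
        exact hc'p this
  -- bypass to a path c' → c avoiding the edge; but the unique path is the edge itself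
  have hbyp : W.bypass.IsPath := Walk.bypass_isPath W
  have hedgepath : (Walk.cons hcc.symm Walk.nil : T.Walk c' c).IsPath := by
    simp [hcc.ne']
  have huniq := hT.IsAcyclic.path_unique ⟨W.bypass, hbyp⟩ ⟨Walk.cons hcc.symm Walk.nil, hedgepath⟩
  have : s(c, c') ∈ W.bypass.edges := by
    have : W.bypass = (Walk.cons hcc.symm Walk.nil : T.Walk c' c) := by
      simpa using congrArg (fun r : T.Path c' c => r.1) huniq
    rw [this]
    simp [Sym2.eq_swap]
  exact hWedge (Walk.edges_bypass_subset _ this)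

private lemma st10_cross_walk (hT : T.IsTree) {c c' : β} (hcc : T.Adj c c') :
    ∀ {z z' : β} (W : T.Walk z z'), T.dist z c + 1 = T.dist z c' →
      T.dist z' c' + 1 = T.dist z' c →
      T.dist z c + 1 + T.dist c' z' ≤ W.length := by
  intro z z' W
  induction W with
  | nil => intro h1 h2; omega
  | @cons a b zz h W ih =>
    intro h1 h2
    rcases st10_side_or hT hcc b with hb | hb
    · have h3 := ih hb h2
      have h4 : T.dist a c ≤ T.dist a b + T.dist b c := hT.isConnected.dist_triangle
      have h5 : T.dist a b ≤ 1 := by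
        have : T.dist a b ≤ (Walk.cons h Walk.nil : T.Walk a b).length := dist_le _
        simpa using this
      simp only [Walk.length_cons]
      omega
    · obtain ⟨hzc, hwc⟩ := st10_cross_edge hT hcc h h1 hb
      have h6 : T.dist b zz ≤ W.length := dist_le _
      simp only [Walk.length_cons]
      rw [hzc, ← hwc]
      simp only [SimpleGraph.dist_self]
      omega

private lemma st10_cross_dist (hT : T.IsTree) {c c' z z' : β} (hcc : T.Adj c c')
    (hz : T.dist z c + 1 = T.dist z c')
    (hz' : T.dist z' c' + 1 = T.dist z' c) :
    T.dist z c + 1 + T.dist c' z' ≤ T.dist z z' := by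
  obtain ⟨p, hlp⟩ := (hT.isConnected z z').exists_walk_length_eq_dist
  rw [← hlp]
  exact st10_cross_walk hT hcc p hz hz'

private lemma st10_getVert_dist_le (hT : T.IsTree) :
    ∀ {x y : β} (W : T.Walk x y) (i : ℕ), T.dist x (W.getVert i) ≤ i ∧
      T.dist (W.getVert i) y ≤ W.length - i := by
  intro x y W
  induction W with
  | nil =>
    intro i
    rw [Walk.getVert_of_length_le Walk.nil (by simp)]
    simp [SimpleGraph.dist_self]
  | @cons a b zz h W ih =>
    intro i
    cases i with
    | zero =>
      constructor
      · simp [SimpleGraph.dist_self, Walk.getVert_zero]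
      · have : T.dist a zz ≤ (Walk.cons h W).length := dist_le _
        simpa using this
    | succ n =>
      obtain ⟨ih1, ih2⟩ := ih n
      constructor
      · rw [Walk.getVert_cons_succ]
        have h4 : T.dist a (W.getVert n) ≤ T.dist a b + T.dist b (W.getVert n) :=
          hT.isConnected.dist_triangle
        have h5 : T.dist a b ≤ 1 := by
          have : T.dist a b ≤ (Walk.cons h Walk.nil : T.Walk a b).length := dist_le _
          simpa using this
        omega
      · rw [Walk.getVert_cons_succ]
        simpa [Walk.length_cons, Nat.succ_sub_succ] using ih2

/-- Coordinates of the two middle vertices of a shortest path. -/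
private lemma st10_edge_on_path (hT : T.IsTree) {x y : β} (q : ℕ)
    (hq : q + 1 ≤ T.dist x y) :
    ∃ c c' : β, T.Adj c c' ∧ T.dist x c = q ∧ T.dist x c' = q + 1 ∧
      T.dist c y = T.dist x y - q ∧ T.dist c' y = T.dist x y - q - 1 := by
  obtain ⟨W, hlW⟩ := (hT.isConnected x y).exists_walk_length_eq_dist
  set D := T.dist x y with hD
  refine ⟨W.getVert q, W.getVert (q + 1), ?_, ?_, ?_, ?_, ?_⟩
  · exact W.adj_getVert_succ (by omega)
  all_goals {
    have h1 := st10_getVert_dist_le hT W q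
    have h2 := st10_getVert_dist_le hT W (q + 1)
    have t1 : D ≤ T.dist x (W.getVert q) + T.dist (W.getVert q) y :=
      hT.isConnected.dist_triangle
    have t2 : D ≤ T.dist x (W.getVert (q+1)) + T.dist (W.getVert (q+1)) y :=
      hT.isConnected.dist_triangle
    rw [hlW] at h1 h2
    omega
  }

private lemma st10_tri_edge (hT : T.IsTree) {c c' : β} (hcc : T.Adj c c') (x y : β) :
    T.dist x y ≤ T.dist x c + 1 + T.dist c' y := by
  have h1 : T.dist x y ≤ T.dist x c + T.dist c y := hT.isConnected.dist_triangle
  have h2 : T.dist c y ≤ T.dist c c' + T.dist c' y := hT.isConnected.dist_triangle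
  have e1 : T.dist c c' = 1 := SimpleGraph.dist_eq_one_iff_adj.mpr hcc
  omega

private lemma st10_tri_cc (hT : T.IsTree) (c x y : β) :
    T.dist x y ≤ T.dist x c + T.dist y c := by
  have h1 : T.dist x y ≤ T.dist x c + T.dist c y := hT.isConnected.dist_triangle
  have h2 : T.dist c y = T.dist y c := SimpleGraph.dist_comm
  omega

private lemma st10_tri_cc' (hT : T.IsTree) (c x y : β) :
    T.dist x y ≤ T.dist c x + T.dist c y := by
  have h1 : T.dist x y ≤ T.dist x c + T.dist c y := hT.isConnected.dist_triangle
  have h2 : T.dist c x = T.dist x c := SimpleGraph.dist_comm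
  omega

end TreeTools2

section GraphTools
variable {α : Type*} {G : SimpleGraph α}

/-- reachability from `u` by walks avoiding `S` -/
private def RAv (G : SimpleGraph α) (S : Set α) (u w : α) : Prop :=
  ∃ p : G.Walk u w, ∀ x ∈ p.support, x ∉ S

private lemma rav_notMem {S : Set α} {u w : α} (h : RAv G S u w) : w ∉ S := by
  obtain ⟨p, hp⟩ := h
  exact hp w p.end_mem_support

private lemma rav_start {S : Set α} {u : α} (h : u ∉ S) : RAv G S u u :=
  ⟨Walk.nil, by simpa using h⟩

private lemma rav_adj {S : Set α} {u a x : α} (h : RAv G S u a) (hadj : G.Adj a x)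
    (hx : x ∉ S) : RAv G S u x := by
  obtain ⟨p, hp⟩ := h
  refine ⟨p.append (Walk.cons hadj Walk.nil), ?_⟩
  intro y hy
  rw [Walk.mem_support_append_iff] at hy
  rcases hy with hy | hy
  · exact hp y hy
  · simp at hy
    rcases hy with rfl | rfl
    · exact hp y p.end_mem_support
    · exact hx

private lemma rav_walk {S : Set α} {u a b : α} (ha : RAv G S u a) (hb : RAv G S u b) :
    ∃ W : G.Walk a b, ∀ w ∈ W.support, RAv G S u w := by
  classical
  obtain ⟨p, hp⟩ := ha
  obtain ⟨q, hq⟩ := hb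
  refine ⟨p.reverse.append q, ?_⟩
  intro w hw
  rw [Walk.mem_support_append_iff] at hw
  rcases hw with hw | hw
  · rw [Walk.support_reverse, List.mem_reverse] at hw
    exact ⟨p.takeUntil w hw, fun x hx => hp x (p.support_takeUntil_subset hw hx)⟩
  · exact ⟨q.takeUntil w hw, fun x hx => hq x (q.support_takeUntil_subset hw hx)⟩

private lemma rav_not_both {S : Set α} {u v w : α}
    (hUV : IsUVSep G S u v) (hu : RAv G S u w) (hv : RAv G S v w) : False := by
  obtain ⟨p, hp⟩ := hu
  obtain ⟨q, hq⟩ := hv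
  obtain ⟨x, hx, hxS⟩ := hUV.2.2 (p.append q.reverse)
  rw [Walk.mem_support_append_iff] at hx
  rcases hx with hx | hx
  · exact hp x hx hxS
  · rw [Walk.support_reverse, List.mem_reverse] at hx
    exact hq x hx hxS

private lemma isUVSep_symm {S : Set α} {u v : α} (h : IsUVSep G S u v) : IsUVSep G S v u := by
  refine ⟨h.2.1, h.1, fun p => ?_⟩
  obtain ⟨w, hw, hwS⟩ := h.2.2 p.reverse
  rw [Walk.support_reverse, List.mem_reverse] at hw
  exact ⟨w, hw, hwS⟩

/-- every vertex of a minimal separator has a neighbor in the `u`-side region -/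
private lemma minsep_nbr {S : Set α} {u v s : α}
    (hUV : IsUVSep G S u v) (hmin : ∀ S' ⊂ S, ¬ IsUVSep G S' u v) (hs : s ∈ S) :
    ∃ a, G.Adj s a ∧ RAv G S u a := by
  classical
  have hsub : S \ {s} ⊂ S := Set.sdiff_singleton_ssubset.mpr hs
  have hnot := hmin _ hsub
  rw [IsUVSep] at hnot
  push_neg at hnot
  obtain ⟨p, hp⟩ := hnot (fun hu => hUV.1 hu.1) (fun hv => hUV.2.1 hv.1)
  -- p : G.Walk u v avoiding S \ {s}
  have hsp : s ∈ p.support := by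
    obtain ⟨w, hw, hwS⟩ := hUV.2.2 p
    have := hp w hw
    have : w = s := by
      by_contra hne
      exact this ⟨hwS, hne⟩
    rwa [← this]
  set t1 : G.Walk u s := p.takeUntil s hsp with ht1
  have hcount : t1.support.count s = 1 := p.count_support_takeUntil_eq_one hsp
  have hsu : s ≠ u := fun h => hUV.1 (h ▸ hs)
  obtain ⟨a, hadj, q, hq⟩ := Walk.exists_eq_cons_of_ne hsu t1.reverse
  refine ⟨a, hadj, q.reverse, ?_⟩
  intro x hx
  rw [Walk.support_reverse, List.mem_reverse] at hx
  have hxt1 : x ∈ t1.support := by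
    have : x ∈ t1.reverse.support := by
      rw [hq, Walk.support_cons]
      exact List.mem_cons_of_mem _ hx
    rwa [Walk.support_reverse, List.mem_reverse] at this
  have hxnotS' : x ∉ S \ {s} := hp x (p.support_takeUntil_subset hsp hxt1)
  have hxs : x ≠ s := by
    intro hxeq
    subst hxeq
    have h2 : t1.reverse.support.count x = 1 := by
      rw [Walk.support_reverse, List.count_reverse]
      exact hcount
    rw [hq, Walk.support_cons, List.count_cons_self] at h2
    have : x ∈ q.support → False := by
      intro hmem
      have := List.count_pos_iff.mpr hmem  -- 1 ≤ count
      omega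
    exact this hx
  intro hxS
  exact hxnotS' ⟨hxS, hxs⟩

end GraphTools

section CrossTools
variable {α β : Type*} {G : SimpleGraph α} {T : SimpleGraph β} {f : α → β} {k : ℕ}

private lemma cross_in_aux (pside : β → Prop) (P : α → Prop) {t : α}
    (ht : ¬ pside (f t)) :
    ∀ {a₁ a₂ : α} (Wm : G.Walk a₁ a₂), (∀ w ∈ Wm.support, P w) → pside (f a₁) →
      G.Adj a₂ t →
      ∃ z z', G.Adj z z' ∧ pside (f z) ∧ ¬ pside (f z') ∧ P z ∧ (P z' ∨ z' = t) := by
  intro a₁ a₂ Wm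
  induction Wm with
  | nil =>
    intro hP h1 h2
    exact ⟨_, t, h2, h1, ht, hP _ (Walk.start_mem_support _), Or.inr rfl⟩
  | @cons a b zz h W ih =>
    intro hP h1 h2
    by_cases hb : pside (f b)
    · obtain ⟨z, z', r1, r2, r3, r4, r5⟩ :=
        ih (fun w hw => hP w (by rw [Walk.support_cons]; exact List.mem_cons_of_mem _ hw))
          hb h2
      exact ⟨z, z', r1, r2, r3, r4, r5⟩
    · refine ⟨a, b, h, h1, hb, hP a (Walk.start_mem_support _), Or.inl ?_⟩
      exact hP b (by rw [Walk.support_cons]; exact List.mem_cons_of_mem _ W.start_mem_support)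

private lemma cross_in (pside : β → Prop) (P : α → Prop) {s t a₁ a₂ : α}
    (h1 : G.Adj s a₁) (h2 : G.Adj a₂ t) (Wm : G.Walk a₁ a₂)
    (hWm : ∀ w ∈ Wm.support, P w) (hs : pside (f s)) (ht : ¬ pside (f t)) :
    ∃ z z', G.Adj z z' ∧ pside (f z) ∧ ¬ pside (f z') ∧
      ((z = s ∧ P z') ∨ (P z ∧ P z') ∨ (P z ∧ z' = t)) := by
  by_cases ha1 : pside (f a₁)
  · obtain ⟨z, z', r1, r2, r3, r4, r5⟩ := cross_in_aux pside P ht Wm hWm ha1 h2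
    rcases r5 with r5 | r5
    · exact ⟨z, z', r1, r2, r3, Or.inr (Or.inl ⟨r4, r5⟩)⟩
    · exact ⟨z, z', r1, r2, r3, Or.inr (Or.inr ⟨r4, r5⟩)⟩
  · exact ⟨s, a₁, h1, hs, ha1, Or.inl ⟨rfl, hWm _ Wm.start_mem_support⟩⟩

/-- crossing data for the region of `u`, w.r.t. a tree edge `(c, c')` with `f s`
on the `c`-side and `f t` on the `c'`-side. -/
private lemma cross_data (hroot : IsSteinerRoot k G T f) {S : Set α} {u v s t : α}
    (hUV : IsUVSep G S u v) (hmin : ∀ S' ⊂ S, ¬ IsUVSep G S' u v)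
    (hs : s ∈ S) (ht : t ∈ S) {c c' : β} (hcc : T.Adj c c')
    (hfs : T.dist (f s) c + 1 = T.dist (f s) c')
    (hft : T.dist (f t) c' + 1 = T.dist (f t) c) :
    ∃ z z', (T.dist (f z) c + 1 = T.dist (f z) c') ∧
      (T.dist (f z') c' + 1 = T.dist (f z') c) ∧
      T.dist (f z) c + 1 + T.dist c' (f z') ≤ k ∧
      ((z = s ∧ RAv G S u z') ∨ (RAv G S u z ∧ RAv G S u z') ∨ (RAv G S u z ∧ z' = t)) := by
  have hT := hroot.2.1
  obtain ⟨a₁, ha1, hra1⟩ := minsep_nbr hUV hmin hs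
  obtain ⟨a₂, ha2, hra2⟩ := minsep_nbr hUV hmin ht
  obtain ⟨Wm, hWm⟩ := rav_walk hra1 hra2
  have hft' : ¬ (T.dist (f t) c + 1 = T.dist (f t) c') := by omega
  obtain ⟨z, z', r1, r2, r3, r4⟩ :=
    cross_in (fun zb => T.dist zb c + 1 = T.dist zb c') (RAv G S u)
      ha1 ha2.symm Wm hWm hfs hft'
  have hz'side : T.dist (f z') c' + 1 = T.dist (f z') c := by
    rcases st10_side_or hT hcc (f z') with h | h
    · exact absurd h r3
    · exact h
  have hne : z ≠ z' := fun he => r3 (he ▸ r2)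
  have hdk : T.dist (f z) (f z') ≤ k := (hroot.2.2 z z' hne).mp r1
  have hcross := st10_cross_dist hT hcc r2 hz'side
  exact ⟨z, z', r2, hz'side, le_trans hcross hdk, r4⟩

private lemma contra_pair (hroot : IsSteinerRoot k G T f) {S : Set α} {u v p r : α}
    (hUV : IsUVSep G S u v) (hp : RAv G S u p) (hr : RAv G S v r)
    (hd : T.dist (f p) (f r) ≤ k) : False := by
  by_cases he : p = r
  · exact rav_not_both hUV hp (he ▸ hr)
  · have hadj : G.Adj p r := (hroot.2.2 p r he).mpr hd
    exact rav_not_both hUV (rav_adj hp hadj (rav_notMem hr)) hr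

private lemma no_far_pair (hroot : IsSteinerRoot k G T f) {S : Set α} {u v s t : α}
    (hUV : IsUVSep G S u v) (hmin : ∀ S' ⊂ S, ¬ IsUVSep G S' u v)
    (hs : s ∈ S) (ht : t ∈ S) (hk : 1 ≤ k) :
    T.dist (f s) (f t) < k := by
  have hT := hroot.2.1
  by_contra hcon
  push_neg at hcon
  have hqD : k / 2 + 1 ≤ T.dist (f s) (f t) := by omega
  obtain ⟨c, c', hcc, e1, e2, e3, e4⟩ := st10_edge_on_path hT (k / 2) hqD
  have e3' : T.dist c (f t) + (k / 2) = T.dist (f s) (f t) := by omega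
  have e4' : T.dist c' (f t) + (k / 2) + 1 = T.dist (f s) (f t) := by omega
  have hfs : T.dist (f s) c + 1 = T.dist (f s) c' := by omega
  have hft : T.dist (f t) c' + 1 = T.dist (f t) c := by
    have c3 : T.dist (f t) c = T.dist c (f t) := SimpleGraph.dist_comm
    have c4 : T.dist (f t) c' = T.dist c' (f t) := SimpleGraph.dist_comm
    omega
  have hUV' : IsUVSep G S v u := isUVSep_symm hUV
  have hmin' : ∀ S' ⊂ S, ¬ IsUVSep G S' v u :=
    fun S' hss hc => hmin S' hss (isUVSep_symm hc)
  obtain ⟨zA, zA', sA1, sA2, sumA, memA⟩ := cross_data hroot hUV hmin hs ht hcc hfs hft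
  obtain ⟨zB, zB', sB1, sB2, sumB, memB⟩ := cross_data hroot hUV' hmin' hs ht hcc hfs hft
  have hbAB' := st10_tri_edge hT hcc (f zA) (f zB')
  have hbBA' := st10_tri_edge hT hcc (f zB) (f zA')
  have hbAB := st10_tri_cc hT c (f zA) (f zB)
  have hbA'B' := st10_tri_cc' hT c' (f zA') (f zB')
  have hftc : T.dist (f t) c' = T.dist c' (f t) := SimpleGraph.dist_comm
  rcases memA with ⟨hzAs, hrA'⟩ | ⟨hrA, hrA'⟩ | ⟨hrA, hzA't⟩ <;>
    rcases memB with ⟨hzBs, hrB'⟩ | ⟨hrB, hrB'⟩ | ⟨hrB, hzB't⟩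
  -- case (s,i)(s,i)
  · subst hzAs; subst hzBs
    have hch : T.dist (f zA') (f zB') ≤ k := by omega
    exact contra_pair hroot hUV hrA' hrB' hch
  -- case (s,i)(i,i)
  · subst hzAs
    have hch : T.dist (f zB) (f zA') ≤ k ∨ T.dist (f zA') (f zB') ≤ k := by omega
    rcases hch with hch | hch
    · exact contra_pair hroot hUV hrA' hrB (by rwa [SimpleGraph.dist_comm] at hch)
    · exact contra_pair hroot hUV hrA' hrB' hch
  -- case (s,i)(i,t)
  · subst hzAs; subst hzB't
    have hch : T.dist (f zB) (f zA') ≤ k := by omega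
    exact contra_pair hroot hUV hrA' hrB (by rwa [SimpleGraph.dist_comm] at hch)
  -- case (i,i)(s,i)
  · subst hzBs
    have hch : T.dist (f zA) (f zB') ≤ k ∨ T.dist (f zA') (f zB') ≤ k := by omega
    rcases hch with hch | hch
    · exact contra_pair hroot hUV hrA hrB' hch
    · exact contra_pair hroot hUV hrA' hrB' hch
  -- case (i,i)(i,i)
  · have hch : T.dist (f zA) (f zB') ≤ k ∨ T.dist (f zB) (f zA') ≤ k := by omega
    rcases hch with hch | hch
    · exact contra_pair hroot hUV hrA hrB' hch
    · exact contra_pair hroot hUV hrA' hrB (by rwa [SimpleGraph.dist_comm] at hch)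
  -- case (i,i)(i,t)
  · subst hzB't
    have hch : T.dist (f zA) (f zB) ≤ k ∨ T.dist (f zB) (f zA') ≤ k := by omega
    rcases hch with hch | hch
    · exact contra_pair hroot hUV hrA hrB hch
    · exact contra_pair hroot hUV hrA' hrB (by rwa [SimpleGraph.dist_comm] at hch)
  -- case (i,t)(s,i)
  · subst hzA't; subst hzBs
    have hch : T.dist (f zA) (f zB') ≤ k := by omega
    exact contra_pair hroot hUV hrA hrB' hch
  -- case (i,t)(i,i)
  · subst hzA't
    have hch : T.dist (f zA) (f zB') ≤ k ∨ T.dist (f zA) (f zB) ≤ k := by omega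
    rcases hch with hch | hch
    · exact contra_pair hroot hUV hrA hrB' hch
    · exact contra_pair hroot hUV hrA hrB hch
  -- case (i,t)(i,t)
  · subst hzA't; subst hzB't
    have hch : T.dist (f zA) (f zB) ≤ k := by omega
    exact contra_pair hroot hUV hrA hrB hch

private lemma claimC (hroot : IsSteinerRoot k G T f) {S : Set α} {u v s t : α}
    (hUV : IsUVSep G S u v) (hmin : ∀ S' ⊂ S, ¬ IsUVSep G S' u v)
    (hs : s ∈ S) (ht : t ∈ S) (hD1 : 1 ≤ T.dist (f s) (f t))
    (hDk : T.dist (f s) (f t) ≤ k + 1) :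
    ∃ a, RAv G S u a ∧ T.dist (f a) (f s) ≤ k ∧ T.dist (f a) (f t) ≤ k := by
  have hT := hroot.2.1
  by_contra hno
  push_neg at hno
  have hfail : ∀ a, RAv G S u a →
      k + 1 ≤ T.dist (f a) (f s) ∨ k + 1 ≤ T.dist (f a) (f t) := by
    intro a hra
    by_contra hcc2
    push_neg at hcc2
    have := hno a hra (by omega)
    omega
  have hqD : T.dist (f s) (f t) / 2 + 1 ≤ T.dist (f s) (f t) := by omega
  obtain ⟨c, c', hcc, e1, e2, e3, e4⟩ := st10_edge_on_path hT (T.dist (f s) (f t) / 2) hqD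
  have hfs : T.dist (f s) c + 1 = T.dist (f s) c' := by omega
  have hft : T.dist (f t) c' + 1 = T.dist (f t) c := by
    have c3 : T.dist (f t) c = T.dist c (f t) := SimpleGraph.dist_comm
    have c4 : T.dist (f t) c' = T.dist c' (f t) := SimpleGraph.dist_comm
    omega
  obtain ⟨z, z', s1, s2, sum, mem⟩ := cross_data hroot hUV hmin hs ht hcc hfs hft
  have tzs := st10_tri_cc hT c (f z) (f s)
  have tzt : T.dist (f z) (f t) ≤ T.dist (f z) c + T.dist c (f t) :=
    hT.isConnected.dist_triangle
  have tz's := st10_tri_cc' hT c' (f z') (f s)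
  have tz't := st10_tri_cc' hT c' (f z') (f t)
  have hc2 : T.dist c' (f s) = T.dist (f s) c' := SimpleGraph.dist_comm
  have hds : T.dist (f s) (f s) = 0 := by simp
  have hst : T.dist (f s) (f t) = T.dist (f t) (f s) := SimpleGraph.dist_comm
  rcases mem with ⟨hzs, hrz'⟩ | ⟨hrz, hrz'⟩ | ⟨hrz, hz't⟩
  · subst hzs
    have hf' := hfail z' hrz'
    omega
  · have hf := hfail z hrz
    have hf' := hfail z' hrz'
    omega
  · rw [hz't] at sum
    have hf := hfail z hrz
    have c4 : T.dist (f t) c' = T.dist c' (f t) := SimpleGraph.dist_comm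
    omega

private lemma dist_le_card [Fintype β] (hT : T.IsTree) (x y : β) :
    T.dist x y ≤ Fintype.card β := by
  obtain ⟨p, hp, hlp⟩ := hT.isConnected.exists_path_of_dist x y
  have := hp.length_lt
  omega

private lemma setDiam_spec [Fintype β] (hT : T.IsTree) (f : α → β) {S : Set α}
    (hne : S.Nonempty) :
    (∃ s ∈ S, ∃ t ∈ S, T.dist (f s) (f t) = setDiam T (f '' S)) ∧
    ∀ s ∈ S, ∀ t ∈ S, T.dist (f s) (f t) ≤ setDiam T (f '' S) := by
  classical
  set Dset := {d | ∃ x ∈ f '' S, ∃ y ∈ f '' S, T.dist x y = d} with hDset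
  have hbdd : BddAbove Dset := by
    refine ⟨Fintype.card β, fun d hd => ?_⟩
    obtain ⟨x, hx, y, hy, hxy⟩ := hd
    exact hxy ▸ dist_le_card hT x y
  have hnembd : Dset.Nonempty := by
    obtain ⟨s₀, hs₀⟩ := hne
    exact ⟨T.dist (f s₀) (f s₀), ⟨f s₀, Set.mem_image_of_mem f hs₀,
      f s₀, Set.mem_image_of_mem f hs₀, rfl⟩⟩
  constructor
  · have hmem : setDiam T (f '' S) ∈ Dset := Nat.sSup_mem hnembd hbdd
    obtain ⟨x, hx, y, hy, hxy⟩ := hmem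
    obtain ⟨s, hsS, rfl⟩ := hx
    obtain ⟨t, htS, rfl⟩ := hy
    exact ⟨s, hsS, t, htS, hxy⟩
  · intro s hsS t htS
    exact le_csSup hbdd ⟨f s, Set.mem_image_of_mem f hsS, f t, Set.mem_image_of_mem f htS, rfl⟩

private lemma minsep_nonempty (hG : G.Connected) {S : Set α} (hms : IsMinSep G S) :
    S.Nonempty := by
  obtain ⟨u, v, hne, hnadj, hUV, hmin⟩ := hms
  obtain ⟨p⟩ := hG.preconnected u v
  obtain ⟨w, hw, hwS⟩ := hUV.2.2 p
  exact ⟨w, hwS⟩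

private lemma final_blow (hroot : IsSteinerRoot k G T f) {S : Set α} {u' x s t a : α}
    (hra : RAv G S u' a) (hxu : ¬ RAv G S u' x) (hxS : x ∉ S)
    (has : T.dist (f a) (f s) ≤ k) (hat : T.dist (f a) (f t) ≤ k)
    (hxs : T.dist (f x) (f s) ≤ T.dist (f s) (f t))
    (hxt : T.dist (f x) (f t) ≤ T.dist (f s) (f t))
    (hD1 : 1 ≤ T.dist (f s) (f t)) (hDk : T.dist (f s) (f t) ≤ k) : False := by
  have hT := hroot.2.1
  have hqD : T.dist (f s) (f t) / 2 + 1 ≤ T.dist (f s) (f t) := by omega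
  obtain ⟨c, c', hcc, e1, e2, e3, e4⟩ := st10_edge_on_path hT (T.dist (f s) (f t) / 2) hqD
  have hfs : T.dist (f s) c + 1 = T.dist (f s) c' := by omega
  have hft : T.dist (f t) c' + 1 = T.dist (f t) c := by
    have c3 : T.dist (f t) c = T.dist c (f t) := SimpleGraph.dist_comm
    have c4 : T.dist (f t) c' = T.dist c' (f t) := SimpleGraph.dist_comm
    omega
  -- distance comm bookkeeping
  have cas : T.dist (f a) (f s) = T.dist (f s) (f a) := SimpleGraph.dist_comm
  have cat : T.dist (f a) (f t) = T.dist (f t) (f a) := SimpleGraph.dist_comm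
  have cxs : T.dist (f x) (f s) = T.dist (f s) (f x) := SimpleGraph.dist_comm
  have cxt : T.dist (f x) (f t) = T.dist (f t) (f x) := SimpleGraph.dist_comm
  -- bound for a / x on either side
  have hkey : T.dist (f a) (f x) ≤ k := by
    rcases st10_side_or hT hcc (f a) with sa | sa <;>
      rcases st10_side_or hT hcc (f x) with sx | sx
    · -- both on c side
      have ba : T.dist (f a) c + 1 + T.dist c' (f t) ≤ T.dist (f a) (f t) :=
        st10_cross_dist hT hcc sa hft
      have bx : T.dist (f x) c + 1 + T.dist c' (f t) ≤ T.dist (f x) (f t) :=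
        st10_cross_dist hT hcc sx hft
      have tb := st10_tri_cc hT c (f a) (f x)
      omega
    · -- a on c side, x on c' side
      have ba : T.dist (f a) c + 1 + T.dist c' (f t) ≤ T.dist (f a) (f t) :=
        st10_cross_dist hT hcc sa hft
      have bx : T.dist (f s) c + 1 + T.dist c' (f x) ≤ T.dist (f s) (f x) :=
        st10_cross_dist hT hcc hfs sx
      have tb := st10_tri_edge hT hcc (f a) (f x)
      omega
    · -- a on c' side, x on c side
      have ba : T.dist (f s) c + 1 + T.dist c' (f a) ≤ T.dist (f s) (f a) :=
        st10_cross_dist hT hcc hfs sa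
      have bx : T.dist (f x) c + 1 + T.dist c' (f t) ≤ T.dist (f x) (f t) :=
        st10_cross_dist hT hcc sx hft
      have tb := st10_tri_edge hT hcc (f x) (f a)
      have cax : T.dist (f a) (f x) = T.dist (f x) (f a) := SimpleGraph.dist_comm
      omega
    · -- both on c' side
      have ba : T.dist (f s) c + 1 + T.dist c' (f a) ≤ T.dist (f s) (f a) :=
        st10_cross_dist hT hcc hfs sa
      have bx : T.dist (f s) c + 1 + T.dist c' (f x) ≤ T.dist (f s) (f x) :=
        st10_cross_dist hT hcc hfs sx
      have tb := st10_tri_cc' hT c' (f a) (f x)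
      omega
  have hax : a ≠ x := fun h => hxu (h ▸ hra)
  have hadj : G.Adj a x := (hroot.2.2 a x hax).mpr hkey
  exact hxu (rav_adj hra hadj hxS)

private lemma diam_strict [Fintype α] [Fintype β] (hroot : IsSteinerRoot k G T f)
    (hG : G.Connected) (hk : 1 ≤ k) {S S' : Set α}
    (hms : IsMinSep G S) (hms' : IsMinSep G S') (hss : S ⊂ S') :
    setDiam T (f '' S) < setDiam T (f '' S') := by
  have hT := hroot.2.1
  have hSne := minsep_nonempty hG hms
  have hS'ne := minsep_nonempty hG hms'
  obtain ⟨spec1, _⟩ := setDiam_spec (T := T) hT f hSne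
  obtain ⟨_, spec2u⟩ := setDiam_spec (T := T) hT f hS'ne
  obtain ⟨s, hsS, t, htS, hstd⟩ := spec1
  have hle : setDiam T (f '' S) ≤ setDiam T (f '' S') := by
    rw [← hstd]
    exact spec2u s (hss.1 hsS) t (hss.1 htS)
  rcases lt_or_eq_of_le hle with h | heq
  · exact h
  exfalso
  obtain ⟨x, hxS', hxS⟩ := Set.exists_of_ssubset hss
  obtain ⟨u, v, hneuv, hnadjuv, hUV, hmin⟩ := hms
  by_cases hD0 : setDiam T (f '' S) = 0
  · obtain ⟨s₀, hs₀⟩ := hSne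
    have hxd : T.dist (f x) (f s₀) ≤ 0 := by
      have := spec2u x hxS' s₀ (hss.1 hs₀)
      omega
    have hfeq : f x = f s₀ :=
      ((hT.isConnected.preconnected (f x) (f s₀)).dist_eq_zero_iff).mp (by omega)
    exact hxS ((hroot.1 hfeq) ▸ hs₀)
  -- now the diameter D ≥ 1
  have hD1 : 1 ≤ T.dist (f s) (f t) := by omega
  have hDlt : T.dist (f s) (f t) < k := no_far_pair hroot hUV hmin hsS htS hk
  have hxs : T.dist (f x) (f s) ≤ T.dist (f s) (f t) := by
    have := spec2u x hxS' s (hss.1 hsS); omega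
  have hxt : T.dist (f x) (f t) ≤ T.dist (f s) (f t) := by
    have := spec2u x hxS' t (hss.1 htS); omega
  by_cases hxu : RAv G S u x
  · -- x is in the u-region; use the v-region
    have hUV' : IsUVSep G S v u := isUVSep_symm hUV
    have hmin' : ∀ S₀ ⊂ S, ¬ IsUVSep G S₀ v u :=
      fun S₀ h hc => hmin S₀ h (isUVSep_symm hc)
    obtain ⟨a, hra, ha1, ha2⟩ := claimC hroot hUV' hmin' hsS htS hD1 (by omega)
    have hxv : ¬ RAv G S v x := fun h => rav_not_both hUV hxu h
    exact final_blow hroot hra hxv hxS ha1 ha2 hxs hxt hD1 (by omega)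
  · obtain ⟨a, hra, ha1, ha2⟩ := claimC hroot hUV hmin hsS htS hD1 (by omega)
    exact final_blow hroot hra hxu hxS ha1 ha2 hxs hxt hD1 (by omega)

end CrossTools

end Aux

/-- If `G` admits a `k`-Steiner root, then there is no chain of `k + 1`
minimal separators of `G` strictly ordered by inclusion. -/
theorem stmt10 {α β : Type*} [Fintype α] [Fintype β] (k : ℕ)
    (G : SimpleGraph α) (hG : G.Connected) (T : SimpleGraph β) (f : α → β)
    (hroot : IsSteinerRoot k G T f) :
    ¬ ∃ Ss : Fin (k + 1) → Set α,
        (∀ i, IsMinSep G (Ss i)) ∧ ∀ i j : Fin (k + 1), i < j → Ss i ⊂ Ss j := by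
  rintro ⟨Ss, hms, hchain⟩
  have hT := hroot.2.1
  rcases Nat.eq_zero_or_pos k with hk0 | hk
  · subst hk0
    obtain ⟨s, hsS⟩ := minsep_nonempty hG (hms 0)
    obtain ⟨u, v, hneuv, hnadjuv, hUV, hmin⟩ := hms 0
    obtain ⟨a, hadj, hra⟩ := minsep_nbr hUV hmin hsS
    have hax : s ≠ a := G.ne_of_adj hadj
    have hd0 : T.dist (f s) (f a) ≤ 0 := (hroot.2.2 s a hax).mp hadj
    have hfeq : f s = f a :=
      ((hT.isConnected.preconnected (f s) (f a)).dist_eq_zero_iff).mp (by omega)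
    exact hax (hroot.1 hfeq)
  · have hmono : ∀ n, (hn : n < k + 1) → n ≤ setDiam T (f '' Ss ⟨n, hn⟩) := by
      intro n
      induction n with
      | zero => intro hn; exact Nat.zero_le _
      | succ m ihm =>
        intro hn
        have hm : m < k + 1 := by omega
        have h1 := ihm hm
        have hlt : (⟨m, hm⟩ : Fin (k+1)) < ⟨m+1, hn⟩ := by
          simp [Fin.lt_def]
        have h2 := diam_strict hroot hG hk (hms ⟨m, hm⟩) (hms ⟨m+1, hn⟩)
          (hchain _ _ hlt)
        omega
    have hlastlt : k < k + 1 := by omega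
    have hlast := hmono k hlastlt
    have hSLne := minsep_nonempty hG (hms ⟨k, hlastlt⟩)
    obtain ⟨⟨s, hsS, t, htS, hstd⟩, _⟩ := setDiam_spec (T := T) hT f hSLne
    obtain ⟨u, v, hneuv, hnadjuv, hUV, hmin⟩ := hms ⟨k, hlastlt⟩
    have := no_far_pair hroot hUV hmin hsS htS hk
    omega
end

section
/- Let T be a k-Steiner root of a graph G and let X be a clique-intersection of G. Then the smallest subtree T⟨X⟩ of T containing X has at most O(k·|X|) nodes; precisely, |V(T⟨X⟩)| ≤ k·|X| + 1. -/
/-- If `T` is a `k`-Steiner root of `G` and `X` is a clique-intersection of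
`G`, then the smallest subtree of `T` containing `X` has at most
`k·|X| + 1` nodes. -/
theorem stmt11 {α β : Type*} [Fintype α] [Fintype β] (k : ℕ)
    (G : SimpleGraph α) (hG : G.Connected) (T : SimpleGraph β) (f : α → β)
    (hroot : IsSteinerRoot k G T f) (X : Set α)
    (hX : IsCliqueIntersection G X) :
    (span T (f '' X)).ncard ≤ k * X.ncard + 1 := by
  classical
  obtain ⟨hinj, hT, hadj⟩ := hroot
  rcases X.eq_empty_or_nonempty with hE | ⟨x0, hx0⟩
  · have h0 : span T (f '' X) = ∅ := by
      rw [hE]; ext w; simp [span]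
    simp [h0]
  obtain ⟨𝒦, ⟨K, hK⟩, hmax, hXeq⟩ := hX
  have hXK : X ⊆ K := by rw [hXeq]; exact Set.sInter_subset_of_mem hK
  have hclique : G.IsClique X := ((hmax K hK).1).subset hXK
  have hconn := hT.isConnected
  set b0 := f x0 with hb0
  have hdist : ∀ x ∈ X, T.dist b0 (f x) ≤ k := by
    intro x hx
    by_cases h : x0 = x
    · subst h; rw [hb0]; simp [SimpleGraph.dist_self]
    · exact (hadj x0 x h).mp (hclique hx0 hx h)
  have hW : ∀ x : α, ∃ p : T.Walk b0 (f x), p.length = T.dist b0 (f x) :=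
    fun x => hconn.exists_walk_length_eq_dist b0 (f x)
  choose W hWlen using hW
  set P : ∀ x, T.Walk b0 (f x) := fun x => (W x).bypass with hP
  have hPpath : ∀ x, (P x).IsPath := fun x => (W x).bypass_isPath
  have hPlen : ∀ x ∈ X, (P x).length ≤ k := fun x hx =>
    le_trans ((W x).length_bypass_le) (by rw [hWlen]; exact hdist x hx)
  have hcov : ∀ w ∈ span T (f '' X), ∃ x ∈ X, w ∈ (P x).support := by
    rintro w ⟨u, ⟨a, ha, rfl⟩, v, ⟨b, hb, rfl⟩, p, hp, hw⟩
    obtain ⟨p0, _, hun⟩ := hT.existsUnique_path (f a) (f b)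
    set q : T.Walk (f a) (f b) := (P a).reverse.append (P b) with hq
    have hpq : p = q.bypass := (hun p hp).trans (hun q.bypass q.bypass_isPath).symm
    have hw' : w ∈ q.support := q.support_bypass_subset (hpq ▸ hw)
    rw [hq, SimpleGraph.Walk.mem_support_append_iff] at hw'
    rcases hw' with h | h
    · exact ⟨a, ha, by rwa [SimpleGraph.Walk.support_reverse, List.mem_reverse] at h⟩
    · exact ⟨b, hb, h⟩
  set A : Finset β := X.toFinset.biUnion (fun x => (P x).support.toFinset \ {b0}) with hA
  have hsub : span T (f '' X) ⊆ ↑(insert b0 A) := by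
    intro w hw
    obtain ⟨x, hx, hws⟩ := hcov w hw
    by_cases h : w = b0
    · simp [h]
    · refine Finset.mem_coe.mpr (Finset.mem_insert_of_mem ?_)
      refine Finset.mem_biUnion.mpr ⟨x, Set.mem_toFinset.mpr hx, ?_⟩
      simp [h, hws]
  have hcard : ∀ x ∈ X, ((P x).support.toFinset \ {b0}).card ≤ k := by
    intro x hx
    have hnd := (hPpath x).support_nodup
    have h1 : (P x).support.toFinset.card = (P x).support.length :=
      List.toFinset_card_of_nodup hnd
    have h2 : (P x).support.length = (P x).length + 1 :=
      SimpleGraph.Walk.length_support _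
    have hb0mem : b0 ∈ (P x).support.toFinset :=
      List.mem_toFinset.mpr ((P x).start_mem_support)
    have h3 : ((P x).support.toFinset \ {b0}).card
        = (P x).support.toFinset.card - 1 := by
      rw [Finset.card_sdiff_of_subset (Finset.singleton_subset_iff.mpr hb0mem),
        Finset.card_singleton]
    have := hPlen x hx
    omega
  calc (span T (f '' X)).ncard ≤ (insert b0 A).card := by
        rw [← Set.ncard_coe_finset]; exact Set.ncard_le_ncard hsub (Set.toFinite _)
    _ ≤ A.card + 1 := Finset.card_insert_le _ _
    _ ≤ (∑ x ∈ X.toFinset, ((P x).support.toFinset \ {b0}).card) + 1 := by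
        gcongr; exact Finset.card_biUnion_le
    _ ≤ (∑ _x ∈ X.toFinset, k) + 1 := by
        gcongr with x hx; exact hcard x (Set.mem_toFinset.mp hx)
    _ = k * X.ncard + 1 := by
        rw [Finset.sum_const, smul_eq_mul, Set.ncard_eq_toFinset_card', Nat.mul_comm]
end

section
/- Let T be a 4-Steiner root of a graph G and let X be a clique-intersection of G with X ⊊ K for some maximal clique K. If T⟨X⟩ has diameter 3, then X is contained in exactly two maximal cliques of G. -/
section AuxTree

open SimpleGraph Walk

variable {β : Type*} {T : SimpleGraph β}

/-- In a tree, every path realizes the distance between its endpoints. -/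
lemma aux_path_length_eq_dist (ht : T.IsTree) {u v : β} (p : T.Walk u v) (hp : p.IsPath) :
    p.length = T.dist u v := by
  obtain ⟨q, hq, hql⟩ := ht.isConnected.exists_path_of_dist u v
  rw [(ht.existsUnique_path u v).unique hp hq, hql]

/-- Distances split along a vertex of a path in a tree. -/
lemma aux_dist_split (ht : T.IsTree) {u v c : β} (p : T.Walk u v) (hp : p.IsPath)
    (hc : c ∈ p.support) : T.dist u c + T.dist c v = T.dist u v := by
  classical
  have h1 := aux_path_length_eq_dist ht _ (hp.takeUntil hc)
  have h2 := aux_path_length_eq_dist ht _ (hp.dropUntil hc)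
  have h3 := aux_path_length_eq_dist ht p hp
  have h4 := congr_arg Walk.length (p.take_spec hc)
  rw [Walk.length_append] at h4
  omega

/-- In a tree, if `c` lies on the geodesic between `s` and `t`, then for every `x`,
`c` lies on the geodesic from `x` to `s` or from `x` to `t`. -/
lemma aux_on_path_or (ht : T.IsTree) {s t c : β}
    (h : T.dist s c + T.dist c t = T.dist s t) (x : β) :
    T.dist x c + T.dist c s = T.dist x s ∨ T.dist x c + T.dist c t = T.dist x t := by
  classical
  obtain ⟨p1, hp1, hl1⟩ := ht.isConnected.exists_path_of_dist s c
  obtain ⟨p2, hp2, hl2⟩ := ht.isConnected.exists_path_of_dist c t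
  have hW : (p1.append p2).IsPath :=
    Walk.isPath_of_length_eq_dist _ (by rw [Walk.length_append]; omega)
  have hcW : c ∈ (p1.append p2).support := by
    rw [Walk.mem_support_append_iff]; exact Or.inl p1.end_mem_support
  obtain ⟨r1, hr1, _⟩ := ht.isConnected.exists_path_of_dist x s
  obtain ⟨r2, hr2, _⟩ := ht.isConnected.exists_path_of_dist x t
  by_cases h1 : c ∈ r1.support
  · exact Or.inl (aux_dist_split ht r1 hr1 h1)
  by_cases h2 : c ∈ r2.support
  · exact Or.inr (aux_dist_split ht r2 hr2 h2)
  exfalso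
  have heq := (ht.existsUnique_path s t).unique (r1.reverse.append r2).bypass_isPath hW
  rw [← heq] at hcW
  have := (r1.reverse.append r2).support_bypass_subset hcW
  rw [Walk.mem_support_append_iff] at this
  rcases this with hc1 | hc2
  · rw [Walk.support_reverse, List.mem_reverse] at hc1; exact h1 hc1
  · exact h2 hc2

/-- In a tree, adjacent vertices are at different distances from any vertex. -/
lemma aux_adj_dist_ne (ht : T.IsTree) {x y : β} (r : β) (h : T.Adj x y) :
    T.dist r x ≠ T.dist r y := by
  classical
  intro he
  obtain ⟨p, hp, hl⟩ := ht.isConnected.exists_path_of_dist r y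
  by_cases hx : x ∈ p.support
  · have hsplit := aux_dist_split ht p hp hx
    have hxy : T.dist x y = 1 := SimpleGraph.dist_eq_one_iff_adj.mpr h
    omega
  · have hq : (Walk.cons h p.reverse).IsPath := by
      rw [Walk.cons_isPath_iff]
      refine ⟨(Walk.isPath_reverse_iff p).mpr hp, ?_⟩
      rw [Walk.support_reverse, List.mem_reverse]; exact hx
    have hlen := aux_path_length_eq_dist ht _ hq
    have hcomm : T.dist x r = T.dist r x := SimpleGraph.dist_comm
    rw [Walk.length_cons, Walk.length_reverse] at hlen
    omega

/-- Parity of distances along a walk in a tree. -/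
lemma aux_parity (ht : T.IsTree) (r : β) {a b : β} (p : T.Walk a b) :
    (T.dist r a + p.length + T.dist r b) % 2 = 0 := by
  induction p with
  | nil => simp only [Walk.length_nil]; omega
  | @cons a c b h q ih =>
    have hne := aux_adj_dist_ne ht r h
    have h1 : T.dist a c = 1 := SimpleGraph.dist_eq_one_iff_adj.mpr h
    have h2 : T.dist c a = 1 := SimpleGraph.dist_eq_one_iff_adj.mpr h.symm
    have t1 := ht.isConnected.dist_triangle (u := r) (v := a) (w := c)
    have t2 := ht.isConnected.dist_triangle (u := r) (v := c) (w := a)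
    rw [Walk.length_cons]
    omega

/-- Parity of the triangle of distances in a tree. -/
lemma aux_parity3 (ht : T.IsTree) (a b c : β) :
    (T.dist a b + T.dist b c + T.dist a c) % 2 = 0 := by
  obtain ⟨p, hp, hl⟩ := ht.isConnected.exists_path_of_dist b c
  have := aux_parity ht a p
  omega

lemma aux_cons_dist (ht : T.IsTree) {a y w z : β} (h : T.Adj a y) {p : T.Walk y w}
    (hp : (Walk.cons h p).IsPath) (hz : z ∈ p.support) :
    T.dist a z = T.dist y z + 1 := by
  classical
  rw [Walk.cons_isPath_iff] at hp
  have hq : (Walk.cons h (p.takeUntil z hz)).IsPath := by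
    rw [Walk.cons_isPath_iff]
    exact ⟨hp.1.takeUntil hz, fun hc => hp.2 (p.support_takeUntil_subset hz hc)⟩
  have h1 := aux_path_length_eq_dist ht _ hq
  have h2 := aux_path_length_eq_dist ht _ (hp.1.takeUntil hz)
  rw [Walk.length_cons] at h1
  omega

/-- On a path in a tree, a support vertex is recovered from its distance to the start. -/
lemma aux_getVert_of_dist (ht : T.IsTree) {u v z : β} (p : T.Walk u v) (hp : p.IsPath)
    (hz : z ∈ p.support) : p.getVert (T.dist u z) = z := by
  classical
  induction p with
  | nil =>
    rw [Walk.support_nil, List.mem_singleton] at hz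
    subst hz; simp [SimpleGraph.dist_self]
  | @cons a y w h q ih =>
    rw [Walk.support_cons, List.mem_cons] at hz
    rcases hz with rfl | hz
    · simp [SimpleGraph.dist_self]
    · rw [aux_cons_dist ht h hp hz, Walk.getVert_cons_succ]
      exact ih hp.of_cons hz

/-- On a path in a tree, the `i`-th vertex is at distance `i` from the start. -/
lemma aux_dist_getVert (ht : T.IsTree) {u v : β} (p : T.Walk u v) (hp : p.IsPath)
    {i : ℕ} (hi : i ≤ p.length) : T.dist u (p.getVert i) = i := by
  induction p generalizing i with
  | nil =>
    rw [Walk.length_nil] at hi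
    interval_cases i
    simp [SimpleGraph.dist_self]
  | @cons a y w h q ih =>
    rcases i with _ | i
    · simp [SimpleGraph.dist_self]
    · rw [Walk.length_cons] at hi
      rw [Walk.getVert_cons_succ]
      have hz : q.getVert i ∈ q.support :=
        Walk.mem_support_iff_exists_getVert.mpr ⟨i, rfl, by omega⟩
      rw [aux_cons_dist ht h hp hz, ih hp.of_cons (by omega)]

/-- Helly-type center: a set of pairwise distance `≤ 4` vertices of a tree has a
vertex within distance `2` of all of them. -/
lemma aux_center (ht : T.IsTree) {S : Set β} [Fintype β] (hS : S.Nonempty)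
    (hb : ∀ a ∈ S, ∀ b ∈ S, T.dist a b ≤ 4) : ∃ c, ∀ a ∈ S, T.dist c a ≤ 2 := by
  classical
  set E := {d | ∃ a ∈ S, ∃ b ∈ S, T.dist a b = d} with hE
  have hbdd : BddAbove E := by
    refine ⟨4, fun d hd => ?_⟩
    obtain ⟨a, ha, b, hb', hab⟩ := hd
    exact hab ▸ hb a ha b hb'
  obtain ⟨s0, hs0⟩ := hS
  have hne : E.Nonempty := ⟨T.dist s0 s0, s0, hs0, s0, hs0, rfl⟩
  obtain ⟨s, hs, t, htm, hst⟩ := Nat.sSup_mem hne hbdd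
  set D := sSup E with hD
  have hle : ∀ a ∈ S, ∀ b ∈ S, T.dist a b ≤ D := fun a ha b hb' =>
    le_csSup hbdd ⟨a, ha, b, hb', rfl⟩
  have hD4 : D ≤ 4 := hst ▸ hb s hs t htm
  by_cases hD2 : D ≤ 2
  · exact ⟨s, fun a ha => le_trans (hle s hs a ha) hD2⟩
  · obtain ⟨p, hp, hl⟩ := ht.isConnected.exists_path_of_dist s t
    refine ⟨p.getVert (D - 2), fun x hx => ?_⟩
    have hDlen : p.length = D := by rw [hl, hst]
    have hcsup : p.getVert (D - 2) ∈ p.support :=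
      Walk.mem_support_iff_exists_getVert.mpr ⟨D - 2, rfl, by omega⟩
    set c := p.getVert (D - 2) with hc
    have h1 : T.dist s c = D - 2 := aux_dist_getVert ht p hp (by omega)
    have h2 : T.dist s c + T.dist c t = T.dist s t := aux_dist_split ht p hp hcsup
    have h3 := aux_on_path_or ht h2 x
    have hxs := hle x hx s hs
    have hxt := hle x hx t htm
    have e1 : T.dist c s = T.dist s c := SimpleGraph.dist_comm
    have e2 : T.dist c x = T.dist x c := SimpleGraph.dist_comm
    rw [hst] at h2
    omega

end AuxTree

/-- If `T` is a `4`-Steiner root of `G` and `X` is a clique-intersection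
strictly contained in some maximal clique with `diam(T⟨X⟩) = 3`, then `X`
is contained in exactly two maximal cliques of `G`. -/
theorem stmt14 {α β : Type*} [Fintype α] [Fintype β]
    (G : SimpleGraph α) (hG : G.Connected) (T : SimpleGraph β) (f : α → β)
    (hroot : IsSteinerRoot 4 G T f) (K X : Set α)
    (hK : IsMaxClique G K) (hX : IsCliqueIntersection G X) (hsub : X ⊂ K)
    (hd : setDiam T (span T (f '' X)) = 3) :
    ∃ K1 K2 : Set α, K1 ≠ K2 ∧ IsMaxClique G K1 ∧ IsMaxClique G K2 ∧
      X ⊆ K1 ∧ X ⊆ K2 ∧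
      ∀ K', IsMaxClique G K' → X ⊆ K' → K' = K1 ∨ K' = K2 := by
  classical
  obtain ⟨hinj, ht, hadj⟩ := hroot
  obtain ⟨𝒦, h𝒦ne, h𝒦max, hXeq⟩ := hX
  -- the achieved-distance set over the span
  set sp := span T (f '' X) with hsp
  set E := {d | ∃ u ∈ sp, ∃ w ∈ sp, T.dist u w = d} with hEdef
  have hEbdd : BddAbove E := by
    apply Set.Finite.bddAbove
    apply (Set.finite_range (fun p : β × β => T.dist p.1 p.2)).subset
    rintro d ⟨u, -, w, -, h⟩
    exact ⟨(u, w), h⟩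
  have hEne : E.Nonempty := by
    by_contra hcon
    rw [Set.not_nonempty_iff_eq_empty] at hcon
    have h0 : setDiam T sp = sSup E := rfl
    rw [h0, hcon, csSup_empty] at hd
    exact absurd hd (by decide)
  have hmem := Nat.sSup_mem hEne hEbdd
  have hsup : sSup E = 3 := hd
  rw [hsup] at hmem
  obtain ⟨u, hu, v, hv, huv⟩ := hmem
  have hsp3 : ∀ a ∈ sp, ∀ b ∈ sp, T.dist a b ≤ 3 := by
    intro a ha b hb
    have := le_csSup hEbdd (show T.dist a b ∈ E from ⟨a, ha, b, hb, rfl⟩)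
    omega
  -- a second maximal clique containing X
  have hXK : X ⊆ K := hsub.subset
  have hex : ∃ K2 ∈ 𝒦, K2 ≠ K := by
    by_contra hcon
    push_neg at hcon
    have h1 : 𝒦 = {K} := Set.eq_singleton_iff_nonempty_unique_mem.mpr ⟨h𝒦ne, hcon⟩
    rw [h1, Set.sInter_singleton] at hXeq
    exact hsub.ne hXeq
  obtain ⟨K2, hK2mem, hK2ne⟩ := hex
  have hK2max : IsMaxClique G K2 := h𝒦max K2 hK2mem
  have hXK2 : X ⊆ K2 := hXeq ▸ Set.sInter_subset_of_mem hK2mem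
  -- the fixed path between the diametral pair
  obtain ⟨P, hP, hPl⟩ := ht.isConnected.exists_path_of_dist u v
  -- key: every maximal clique containing X has a "center" on P
  have key : ∀ K'', IsMaxClique G K'' → X ⊆ K'' →
      ∃ c ∈ P.support, (∀ x ∈ K'', T.dist c (f x) ≤ 2) ∧
        1 ≤ T.dist u c ∧ T.dist u c ≤ 2 := by
    intro K'' hm hXK''
    -- X is nonempty since u exists in the span
    have hu' := hu
    obtain ⟨a0, ⟨x0, hx0, rfl⟩, -⟩ := hu'
    have hSne : (f '' K'').Nonempty := ⟨f x0, x0, hXK'' hx0, rfl⟩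
    have hpair : ∀ a ∈ f '' K'', ∀ b ∈ f '' K'', T.dist a b ≤ 4 := by
      rintro a ⟨x, hx, rfl⟩ b ⟨y, hy, rfl⟩
      by_cases hxy : x = y
      · subst hxy; simp [SimpleGraph.dist_self]
      · exact (hadj x y hxy).mp (hm.1 hx hy hxy)
    obtain ⟨c, hc⟩ := aux_center ht hSne hpair
    have hc' : ∀ x ∈ K'', T.dist c (f x) ≤ 2 := fun x hx => hc _ ⟨x, hx, rfl⟩
    -- c is within distance 2 of any span vertex
    have hcsp : ∀ w ∈ sp, T.dist c w ≤ 2 := by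
      rintro w ⟨a, ⟨x1, hx1, rfl⟩, b, ⟨x2, hx2, rfl⟩, q, hq, hwq⟩
      have hsplit := aux_dist_split ht q hq hwq
      have h3 := aux_on_path_or ht hsplit c
      have g1 := hc' x1 (hXK'' hx1)
      have g2 := hc' x2 (hXK'' hx2)
      omega
    have hcu : T.dist c u ≤ 2 := hcsp u hu
    have hcv : T.dist c v ≤ 2 := hcsp v hv
    have htri := ht.isConnected.dist_triangle (u := u) (v := c) (w := v)
    have hpar := aux_parity3 ht u c v
    have e1 : T.dist u c = T.dist c u := SimpleGraph.dist_comm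
    have e2 : T.dist c v = T.dist v c := SimpleGraph.dist_comm
    have hsum : T.dist u c + T.dist c v = 3 := by omega
    -- c lies on P
    obtain ⟨q1, hq1, hl1⟩ := ht.isConnected.exists_path_of_dist u c
    obtain ⟨q2, hq2, hl2⟩ := ht.isConnected.exists_path_of_dist c v
    have hW : (q1.append q2).IsPath := by
      apply SimpleGraph.Walk.isPath_of_length_eq_dist
      rw [SimpleGraph.Walk.length_append]
      omega
    have hWP := (ht.existsUnique_path u v).unique hW hP
    have hcP : c ∈ P.support := by
      rw [← hWP, SimpleGraph.Walk.mem_support_append_iff]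
      exact Or.inl q1.end_mem_support
    exact ⟨c, hcP, hc', by omega, by omega⟩
  -- gluing: two maximal cliques sharing a center are equal
  have hglue : ∀ Ka Kb, IsMaxClique G Ka → IsMaxClique G Kb → ∀ c,
      (∀ x ∈ Ka, T.dist c (f x) ≤ 2) → (∀ x ∈ Kb, T.dist c (f x) ≤ 2) → Ka = Kb := by
    intro Ka Kb hKa hKb c hca hcb
    have hcl : G.IsClique (Ka ∪ Kb) := by
      intro x hx y hy hne
      have hx2 : T.dist c (f x) ≤ 2 := by
        rcases hx with hx | hx
        exacts [hca x hx, hcb x hx]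
      have hy2 : T.dist c (f y) ≤ 2 := by
        rcases hy with hy | hy
        exacts [hca y hy, hcb y hy]
      have htri := ht.isConnected.dist_triangle (u := f x) (v := c) (w := f y)
      have e1 : T.dist (f x) c = T.dist c (f x) := SimpleGraph.dist_comm
      exact (hadj x y hne).mpr (by omega)
    have e1 := hKa.2 _ hcl Set.subset_union_left
    have e2 := hKb.2 _ hcl Set.subset_union_right
    exact e1.symm.trans e2
  -- positions on P are determined by distance from u
  have hpos : ∀ c1 ∈ P.support, ∀ c2 ∈ P.support, T.dist u c1 = T.dist u c2 → c1 = c2 := by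
    intro c1 h1 c2 h2 he
    have g1 := aux_getVert_of_dist ht P hP h1
    have g2 := aux_getVert_of_dist ht P hP h2
    rw [he] at g1
    exact g1.symm.trans g2
  obtain ⟨c1, hc1P, hc1, hd1l, hd1u⟩ := key K hK hXK
  obtain ⟨c2, hc2P, hc2, hd2l, hd2u⟩ := key K2 hK2max hXK2
  have hKK2 : K ≠ K2 := fun he => hK2ne he.symm
  refine ⟨K, K2, hKK2, hK, hK2max, hXK, hXK2, ?_⟩
  intro K' hK' hXK'
  obtain ⟨c3, hc3P, hc3, hd3l, hd3u⟩ := key K' hK' hXK'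
  by_contra hcon
  push_neg at hcon
  obtain ⟨hne1, hne2⟩ := hcon
  have n12 : c1 ≠ c2 := fun he => hKK2 (hglue K K2 hK hK2max c1 hc1 (he ▸ hc2))
  have n31 : c3 ≠ c1 := fun he => hne1 (hglue K' K hK' hK c3 hc3 (he ▸ hc1))
  have n32 : c3 ≠ c2 := fun he => hne2 (hglue K' K2 hK' hK2max c3 hc3 (he ▸ hc2))
  have hcases : T.dist u c1 = T.dist u c2 ∨ T.dist u c3 = T.dist u c1 ∨
      T.dist u c3 = T.dist u c2 := by omega
  rcases hcases with h | h | h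
  · exact n12 (hpos c1 hc1P c2 hc2P h)
  · exact n31 (hpos c3 hc3P c1 hc1P h)
  · exact n32 (hpos c3 hc3P c2 hc2P h)
end
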